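/- arXiv:1603.01687 — 9 statements merged into one kernel-verified Lean document; each statement's English description precedes it below -/
import Mathlib

section
/- If n ≥ 3, then the set π is path-connected: any two points of π can be joined by a continuous path lying entirely in π. -/
open Finset

/-- The degree of vertex `i`, as a real number. -/
noncomputable def dd {n : ℕ} (G : SimpleGraph (Fin n)) [DecidableRel G.Adj] (i : Fin n) : ℝ :=
  (G.degree i : ℝ)

/-- The weighted 1-norm `‖x‖_{1,d} = Σ_i d_i |x_i|`. -/
noncomputable def norm1d {n : ℕ} (G : SimpleGraph (Fin n)) [DecidableRel G.Adj]
    (x : Fin n → ℝ) : ℝ :=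
  ∑ i, dd G i * |x i|

/-- `δ₊(x) = Σ_{i : x_i > 0} d_i`. -/
noncomputable def deltaP {n : ℕ} (G : SimpleGraph (Fin n)) [DecidableRel G.Adj]
    (x : Fin n → ℝ) : ℝ :=
  ∑ i, if 0 < x i then dd G i else 0

/-- `δ₋(x) = Σ_{i : x_i < 0} d_i`. -/
noncomputable def deltaM {n : ℕ} (G : SimpleGraph (Fin n)) [DecidableRel G.Adj]
    (x : Fin n → ℝ) : ℝ :=
  ∑ i, if x i < 0 then dd G i else 0

/-- `δ₀(x) = Σ_{i : x_i = 0} d_i`. -/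
noncomputable def delta0 {n : ℕ} (G : SimpleGraph (Fin n)) [DecidableRel G.Adj]
    (x : Fin n → ℝ) : ℝ :=
  ∑ i, if x i = 0 then dd G i else 0

/-- `δ = Σ_i d_i`. -/
noncomputable def deltaTot {n : ℕ} (G : SimpleGraph (Fin n)) [DecidableRel G.Adj] : ℝ :=
  ∑ i, dd G i

/-- The set `X = {x : ‖x‖_{1,d} = 1}`. -/
def Xset {n : ℕ} (G : SimpleGraph (Fin n)) [DecidableRel G.Adj] : Set (Fin n → ℝ) :=
  {x | norm1d G x = 1}

/-- The feasible set `π = {x ∈ X : |δ₊(x) − δ₋(x)| ≤ δ₀(x)}`. -/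
def piSet {n : ℕ} (G : SimpleGraph (Fin n)) [DecidableRel G.Adj] : Set (Fin n → ℝ) :=
  {x | norm1d G x = 1 ∧ |deltaP G x - deltaM G x| ≤ delta0 G x}

/-! Auxiliary development. -/

/-- The multiple `a` of the `i`-th basis vector. -/
def sgl {n : ℕ} (i : Fin n) (a : ℝ) : Fin n → ℝ := fun k => if k = i then a else 0

/-- The cone version of `π`: drop the normalization, keep positivity of the norm. -/
def Cset {n : ℕ} (G : SimpleGraph (Fin n)) [DecidableRel G.Adj] : Set (Fin n → ℝ) :=
  {x | 0 < norm1d G x ∧ |deltaP G x - deltaM G x| ≤ delta0 G x}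

section Aux

variable {n : ℕ} (G : SimpleGraph (Fin n)) [DecidableRel G.Adj]

lemma dd_nonneg (i : Fin n) : 0 ≤ dd G i := by unfold dd; positivity

lemma norm1d_pos (x : Fin n → ℝ) (hd : ∀ i, 0 < dd G i) (k : Fin n) (hk : x k ≠ 0) :
    0 < norm1d G x := by
  refine Finset.sum_pos' (fun i _ => mul_nonneg (dd_nonneg G i) (abs_nonneg _)) ?_
  exact ⟨k, mem_univ k, mul_pos (hd k) (abs_pos.2 hk)⟩

lemma norm1d_smul (c : ℝ) (hc : 0 ≤ c) (x : Fin n → ℝ) :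
    norm1d G (c • x) = c * norm1d G x := by
  unfold norm1d
  rw [Finset.mul_sum]
  refine Finset.sum_congr rfl fun i _ => ?_
  simp only [Pi.smul_apply, smul_eq_mul, abs_mul, abs_of_nonneg hc]
  ring

lemma continuous_norm1d : Continuous (norm1d G) :=
  continuous_finset_sum _ fun i _ => continuous_const.mul ((continuous_apply i).abs)

lemma tri (x : Fin n → ℝ) : deltaP G x + deltaM G x + delta0 G x = deltaTot G := by
  unfold deltaP deltaM delta0 deltaTot
  rw [← Finset.sum_add_distrib, ← Finset.sum_add_distrib]
  refine Finset.sum_congr rfl fun i _ => ?_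
  rcases lt_trichotomy (x i) 0 with h | h | h
  · simp [h, h.ne, asymm h]
  · simp [h]
  · simp [h, h.ne', asymm h]

lemma twice_dd_le (hd : ∀ i, 0 < dd G i) (i : Fin n) : 2 * dd G i ≤ deltaTot G := by
  have h1 : dd G i ≤ ∑ j ∈ univ.erase i, dd G j := by
    have h2 : dd G i = ∑ _j ∈ G.neighborFinset i, (1 : ℝ) := by
      rw [Finset.sum_const, nsmul_eq_mul, mul_one]
      unfold dd
      norm_cast
    rw [h2]
    calc ∑ _j ∈ G.neighborFinset i, (1 : ℝ) ≤ ∑ j ∈ G.neighborFinset i, dd G j := by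
          refine Finset.sum_le_sum fun j _ => ?_
          have := hd j
          unfold dd at this ⊢
          exact_mod_cast Nat.one_le_cast.2 (by exact_mod_cast this)
      _ ≤ ∑ j ∈ univ.erase i, dd G j := by
          refine Finset.sum_le_sum_of_subset_of_nonneg ?_ (fun j _ _ => dd_nonneg G j)
          intro j hj
          rw [SimpleGraph.mem_neighborFinset] at hj
          exact Finset.mem_erase.2 ⟨hj.ne', mem_univ j⟩
  have h3 : dd G i + ∑ j ∈ univ.erase i, dd G j = deltaTot G :=
    Finset.add_sum_erase univ (dd G) (mem_univ i)
  linarith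

lemma deltaP_le (x : Fin n → ℝ) (i : Fin n) (h : ∀ k, k ≠ i → x k ≤ 0) :
    deltaP G x ≤ dd G i := by
  unfold deltaP
  calc (∑ k, if 0 < x k then dd G k else 0) ≤ ∑ k, if k = i then dd G k else 0 := by
        refine Finset.sum_le_sum fun k _ => ?_
        by_cases hk : k = i
        · subst hk
          simp only [if_pos rfl]
          split_ifs
          · exact le_rfl
          · exact dd_nonneg G k
        · rw [if_neg hk, if_neg (not_lt.2 (h k hk))]
    _ = dd G i := by simp

lemma deltaM_le (x : Fin n → ℝ) (j : Fin n) (h : ∀ k, k ≠ j → 0 ≤ x k) :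
    deltaM G x ≤ dd G j := by
  unfold deltaM
  calc (∑ k, if x k < 0 then dd G k else 0) ≤ ∑ k, if k = j then dd G k else 0 := by
        refine Finset.sum_le_sum fun k _ => ?_
        by_cases hk : k = j
        · subst hk
          simp only [if_pos rfl]
          split_ifs
          · exact le_rfl
          · exact dd_nonneg G k
        · rw [if_neg hk, if_neg (not_lt.2 (h k hk))]
    _ = dd G j := by simp

lemma constraint_of (hd : ∀ i, 0 < dd G i) (x : Fin n → ℝ) (i j : Fin n)
    (hi : ∀ k, k ≠ i → x k ≤ 0) (hj : ∀ k, k ≠ j → 0 ≤ x k) :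
    |deltaP G x - deltaM G x| ≤ delta0 G x := by
  have h1 := deltaP_le G x i hi
  have h2 := deltaM_le G x j hj
  have h3 := tri G x
  have h4 := twice_dd_le G hd i
  have h5 := twice_dd_le G hd j
  rw [abs_le]
  constructor <;> linarith

lemma deltas_congr (x y : Fin n → ℝ)
    (h : ∀ k, (0 < x k ↔ 0 < y k) ∧ (x k < 0 ↔ y k < 0) ∧ (x k = 0 ↔ y k = 0)) :
    deltaP G x = deltaP G y ∧ deltaM G x = deltaM G y ∧ delta0 G x = delta0 G y := by
  refine ⟨?_, ?_, ?_⟩ <;>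
    exact Finset.sum_congr rfl fun k _ => by
      first
        | exact if_congr (h k).1 rfl rfl
        | exact if_congr (h k).2.1 rfl rfl
        | exact if_congr (h k).2.2 rfl rfl

lemma joinedIn_of_segment {s : Set (Fin n → ℝ)} {x y : Fin n → ℝ}
    (h : segment ℝ x y ⊆ s) : JoinedIn s x y := by
  have hc : IsPathConnected (segment ℝ x y) :=
    (convex_segment x y).isPathConnected ⟨x, left_mem_segment ℝ x y⟩
  exact (hc.joinedIn x (left_mem_segment ℝ x y) y (right_mem_segment ℝ x y)).mono h

/-- Step A: any point of the cone can be joined (inside the cone) to the multiple of a basis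
vector given by any of its nonzero coordinates, by a straight segment. -/
lemma stepA (hd : ∀ i, 0 < dd G i) (x : Fin n → ℝ) (hx : x ∈ Cset G) (i : Fin n)
    (hi : x i ≠ 0) : JoinedIn (Cset G) x (sgl i (x i)) := by
  apply joinedIn_of_segment
  rintro z ⟨α, β, hα, hβ, hαβ, rfl⟩
  have hz : ∀ k, (α • x + β • sgl i (x i)) k = if k = i then x i else α * x k := by
    intro k
    by_cases hk : k = i
    · subst hk
      simp only [Pi.add_apply, Pi.smul_apply, smul_eq_mul, sgl, eq_self_iff_true, if_true]
      linear_combination (x k) * hαβ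
    · simp [sgl, hk]
  constructor
  · refine norm1d_pos G _ hd i ?_
    rw [hz i, if_pos rfl]; exact hi
  · by_cases hα0 : α = 0
    · refine constraint_of G hd _ i i ?_ ?_ <;>
        · intro k hk
          rw [hz k, if_neg hk, hα0, zero_mul]
    · have hα' : 0 < α := lt_of_le_of_ne hα (Ne.symm hα0)
      have key : ∀ k, (0 < (α • x + β • sgl i (x i)) k ↔ 0 < x k) ∧
          ((α • x + β • sgl i (x i)) k < 0 ↔ x k < 0) ∧
          ((α • x + β • sgl i (x i)) k = 0 ↔ x k = 0) := by
        intro k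
        rw [hz k]
        by_cases hk : k = i
        · subst hk; simp
        · rw [if_neg hk]
          refine ⟨⟨fun h => ?_, fun h => mul_pos hα' h⟩,
            ⟨fun h => ?_, fun h => mul_neg_of_pos_of_neg hα' h⟩, ?_⟩
          · nlinarith
          · nlinarith
          · rw [mul_eq_zero]
            constructor
            · rintro (h | h)
              · exact absurd h hα0
              · exact h
            · exact fun h => Or.inr h
      obtain ⟨e1, e2, e3⟩ := deltas_congr G _ x key
      rw [e1, e2, e3]
      exact hx.2

/-- Step B base case: two opposite-sign basis multiples at distinct indices are joined by a
straight segment inside the cone. -/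
lemma stepC1 (hd : ∀ i, 0 < dd G i) (i j : Fin n) (hij : i ≠ j) (a b : ℝ)
    (ha : 0 < a) (hb : b < 0) :
    JoinedIn (Cset G) (sgl i a) (sgl j b) := by
  apply joinedIn_of_segment
  rintro z ⟨α, β, hα, hβ, hαβ, rfl⟩
  have hz : ∀ k, (α • sgl i a + β • sgl j b) k
      = if k = i then α * a else if k = j then β * b else 0 := by
    intro k
    by_cases hk : k = i
    · subst hk
      simp [sgl, hij]
    · by_cases hk' : k = j
      · subst hk'
        simp [sgl, hk, hij.symm]
      · simp [sgl, hk, hk']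
  constructor
  · by_cases hα0 : α = 0
    · have hβ1 : β = 1 := by rw [hα0] at hαβ; linarith
      refine norm1d_pos G _ hd j ?_
      rw [hz j, if_neg (Ne.symm hij), if_pos rfl, hβ1, one_mul]
      exact hb.ne
    · have hα' : 0 < α := lt_of_le_of_ne hα (Ne.symm hα0)
      refine norm1d_pos G _ hd i ?_
      rw [hz i, if_pos rfl]
      exact (mul_pos hα' ha).ne'
  · refine constraint_of G hd _ i j ?_ ?_
    · intro k hk
      rw [hz k, if_neg hk]
      by_cases h1 : k = j
      · rw [if_pos h1]; nlinarith
      · rw [if_neg h1]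
    · intro k hk
      rw [hz k]
      by_cases h1 : k = i
      · rw [if_pos h1]; exact mul_nonneg hα ha.le
      · rw [if_neg h1, if_neg hk]

lemma exists_third (hn : 3 ≤ n) (i j : Fin n) : ∃ k, k ≠ i ∧ k ≠ j := by
  by_contra h
  push_neg at h
  have hsub : (univ : Finset (Fin n)) ⊆ {i, j} := by
    intro k _
    rcases eq_or_ne k i with hk | hk
    · simp [hk]
    · simp [h k hk]
  have hcard := Finset.card_le_card hsub
  have h2 : ({i, j} : Finset (Fin n)).card ≤ 2 := by
    calc ({i, j} : Finset (Fin n)).card ≤ ({j} : Finset (Fin n)).card + 1 :=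
          Finset.card_insert_le _ _
      _ = 2 := by simp
  simp only [Finset.card_univ, Fintype.card_fin] at hcard
  omega

lemma stepNeg (hd : ∀ i, 0 < dd G i) (hn : 3 ≤ n) (i : Fin n) (a : ℝ) (ha : a < 0)
    (j : Fin n) (b : ℝ) (hb : b < 0) :
    JoinedIn (Cset G) (sgl i a) (sgl j b) := by
  obtain ⟨k, hki, hkj⟩ := exists_third hn i j
  exact (stepC1 G hd k i hki 1 a one_pos ha).symm.trans
    (stepC1 G hd k j hkj 1 b one_pos hb)

lemma stepMix (hd : ∀ i, 0 < dd G i) (hn : 3 ≤ n) (i : Fin n) (a : ℝ) (ha : 0 < a)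
    (j : Fin n) (b : ℝ) (hb : b < 0) :
    JoinedIn (Cset G) (sgl i a) (sgl j b) := by
  obtain ⟨k, hki, _⟩ := exists_third hn i i
  exact (stepC1 G hd i k (Ne.symm hki) a (-1) ha (by norm_num)).trans
    (stepNeg G hd hn k (-1) (by norm_num) j b hb)

lemma stepAll (hd : ∀ i, 0 < dd G i) (hn : 3 ≤ n) (i : Fin n) (a : ℝ) (ha : a ≠ 0)
    (j : Fin n) (b : ℝ) (hb : b ≠ 0) :
    JoinedIn (Cset G) (sgl i a) (sgl j b) := by
  rcases ha.lt_or_gt with ha' | ha' <;> rcases hb.lt_or_gt with hb' | hb'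
  · exact stepNeg G hd hn i a ha' j b hb'
  · exact (stepMix G hd hn j b hb' i a ha').symm
  · exact stepMix G hd hn i a ha' j b hb'
  · exact (stepMix G hd hn i a ha' i (-1) (by norm_num)).trans
      (stepMix G hd hn j b hb' i (-1) (by norm_num)).symm

/-- Renormalizing a path in the cone gives a path in `π`. -/
lemma toPi {x y : Fin n → ℝ} (hx : x ∈ piSet G) (hy : y ∈ piSet G)
    (h : JoinedIn (Cset G) x y) : JoinedIn (piSet G) x y := by
  obtain ⟨γ, hγ⟩ := h
  have hcont : Continuous fun t : unitInterval => (norm1d G (γ t))⁻¹ • γ t := by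
    have h1 : Continuous fun t : unitInterval => γ t := γ.continuous
    exact ((((continuous_norm1d G).comp h1).inv₀ fun t => (hγ t).1.ne')).smul h1
  refine ⟨⟨⟨fun t => (norm1d G (γ t))⁻¹ • γ t, hcont⟩, ?_, ?_⟩, ?_⟩
  · show (norm1d G (γ 0))⁻¹ • γ 0 = x
    rw [γ.source, hx.1, inv_one, one_smul]
  · show (norm1d G (γ 1))⁻¹ • γ 1 = y
    rw [γ.target, hy.1, inv_one, one_smul]
  · intro t
    have hz := hγ t
    have hpos : 0 < norm1d G (γ t) := hz.1
    have hc : 0 < (norm1d G (γ t))⁻¹ := inv_pos.2 hpos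
    show (norm1d G (γ t))⁻¹ • γ t ∈ piSet G
    refine ⟨?_, ?_⟩
    · rw [norm1d_smul G _ hc.le]
      exact inv_mul_cancel₀ hpos.ne'
    · have key : ∀ k, (0 < ((norm1d G (γ t))⁻¹ • γ t) k ↔ 0 < (γ t) k) ∧
          (((norm1d G (γ t))⁻¹ • γ t) k < 0 ↔ (γ t) k < 0) ∧
          (((norm1d G (γ t))⁻¹ • γ t) k = 0 ↔ (γ t) k = 0) := by
        intro k
        simp only [Pi.smul_apply, smul_eq_mul]
        refine ⟨⟨fun h => ?_, fun h => mul_pos hc h⟩,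
          ⟨fun h => ?_, fun h => mul_neg_of_pos_of_neg hc h⟩, ?_⟩
        · nlinarith
        · nlinarith
        · rw [mul_eq_zero]
          constructor
          · rintro (h | h)
            · exact absurd h hc.ne'
            · exact h
          · exact fun h => Or.inr h
      obtain ⟨e1, e2, e3⟩ := deltas_congr G _ _ key
      rw [e1, e2, e3]
      exact hz.2

end Aux

/-- If `n ≥ 3`, the set `π` is path-connected: any two of its points can be joined by a
continuous path lying entirely in `π`. -/
theorem stmt1 {n : ℕ} (G : SimpleGraph (Fin n)) [DecidableRel G.Adj]
    (hd : ∀ i, 0 < dd G i) (hn : 3 ≤ n) :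
    ∀ x ∈ piSet G, ∀ y ∈ piSet G, JoinedIn (piSet G) x y := by
  intro x hx y hy
  have hx' : x ∈ Cset G := ⟨hx.1 ▸ one_pos, hx.2⟩
  have hy' : y ∈ Cset G := ⟨hy.1 ▸ one_pos, hy.2⟩
  obtain ⟨i, hi⟩ : ∃ i, x i ≠ 0 := by
    by_contra h
    push_neg at h
    have h0 : norm1d G x = 0 := by
      unfold norm1d; refine Finset.sum_eq_zero fun k _ => by rw [h k]; simp
    rw [hx.1] at h0
    norm_num at h0
  obtain ⟨j, hj⟩ : ∃ j, y j ≠ 0 := by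
    by_contra h
    push_neg at h
    have h0 : norm1d G y = 0 := by
      unfold norm1d; refine Finset.sum_eq_zero fun k _ => by rw [h k]; simp
    rw [hy.1] at h0
    norm_num at h0
  refine toPi G hx hy ?_
  exact (stepA G hd x hx' i hi).trans
    ((stepAll G hd hn i (x i) hi j (y j) hj).trans (stepA G hd y hy' j hj).symm)
end

section
/- Suppose x, y ∈ X satisfy the sign-preserving property (for all i: x_i = 0 implies y_i = 0; x_i < 0 implies y_i ≤ 0; x_i > 0 implies y_i ≥ 0) and the order-preserving property (for all i, j: x_i = x_j implies y_i = y_j; x_i < x_j implies y_i ≤ y_j). If (μ, x) is an eigenpair of the graph 1-Laplacian Δ₁, then for every t ∈ [0,1], the vector t·x + (1−t)·y lies in X and (μ, t·x + (1−t)·y) is also an eigenpair of Δ₁. -/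
open Finset

/-- The set-valued sign: `Sgn(t) = {1}` if `t > 0`, `{−1}` if `t < 0`, `[−1,1]` if `t = 0`. -/
noncomputable def sgnSet (t : ℝ) : Set ℝ :=
  if 0 < t then {1} else if t < 0 then {-1} else Set.Icc (-1) 1

/-- `(μ, x)` is an eigenpair of the graph 1-Laplacian `Δ₁`: `x ∈ X` and there exist reals
`z_{ij}` for adjacent pairs with `z_{ij} ∈ Sgn(x_i − x_j)`, `z_{ji} = −z_{ij}`, and
`Σ_{j∼i} z_{ij} ∈ μ d_i Sgn(x_i)` for every vertex `i`. -/
noncomputable def IsEigenpair {n : ℕ} (G : SimpleGraph (Fin n)) [DecidableRel G.Adj]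
    (μ : ℝ) (x : Fin n → ℝ) : Prop :=
  norm1d G x = 1 ∧
  ∃ z : Fin n → Fin n → ℝ,
    (∀ i j, G.Adj i j → z i j ∈ sgnSet (x i - x j)) ∧
    (∀ i j, G.Adj i j → z j i = - z i j) ∧
    (∀ i, ∃ s ∈ sgnSet (x i), (∑ j ∈ G.neighborFinset i, z i j) = μ * dd G i * s)


lemma neg_one_mem_sgnSet {u : ℝ} (h : u ≤ 0) : -1 ∈ sgnSet u := by
  unfold sgnSet
  rcases lt_or_eq_of_le h with h' | h'
  · simp [h', not_lt.mpr h]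
  · subst h'; norm_num

lemma one_mem_sgnSet {u : ℝ} (h : 0 ≤ u) : 1 ∈ sgnSet u := by
  unfold sgnSet
  rcases lt_or_eq_of_le h with h' | h'
  · simp [h']
  · subst h'; norm_num

/-- If `x, y ∈ X` satisfy the sign-preserving and order-preserving properties and `(μ, x)` is
an eigenpair of `Δ₁`, then for every `t ∈ [0,1]` the vector `t·x + (1−t)·y` lies in `X` and
`(μ, t·x + (1−t)·y)` is also an eigenpair of `Δ₁`. -/
theorem stmt5 {n : ℕ} (G : SimpleGraph (Fin n)) [DecidableRel G.Adj]
    (hd : ∀ i, 0 < dd G i) (μ : ℝ) (x y : Fin n → ℝ)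
    (hx : x ∈ Xset G) (hy : y ∈ Xset G)
    (hsign : ∀ i, (x i = 0 → y i = 0) ∧ (x i < 0 → y i ≤ 0) ∧ (0 < x i → 0 ≤ y i))
    (horder : ∀ i j, (x i = x j → y i = y j) ∧ (x i < x j → y i ≤ y j))
    (hpair : IsEigenpair G μ x) :
    ∀ t ∈ Set.Icc (0 : ℝ) 1,
      (fun i => t * x i + (1 - t) * y i) ∈ Xset G ∧
      IsEigenpair G μ (fun i => t * x i + (1 - t) * y i) := by
  intro t ht
  obtain ⟨ht0, ht1⟩ := ht
  have ht1' : 0 ≤ 1 - t := by linarith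
  set w := fun i => t * x i + (1 - t) * y i with hwdef
  have habs : ∀ i, |w i| = t * |x i| + (1 - t) * |y i| := by
    intro i
    rcases lt_trichotomy (x i) 0 with h | h | h
    · have hyi := (hsign i).2.1 h
      rw [abs_of_nonpos (show w i ≤ 0 by simp only [hwdef]; nlinarith), abs_of_nonpos h.le, abs_of_nonpos hyi]; ring
    · have hyi := (hsign i).1 h
      simp [hwdef, h, hyi]
    · have hyi := (hsign i).2.2 h
      rw [abs_of_nonneg (show 0 ≤ w i by simp only [hwdef]; nlinarith), abs_of_nonneg h.le, abs_of_nonneg hyi]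
  have hnorm : norm1d G w = 1 := by
    have hx' : norm1d G x = 1 := hx
    have hy' : norm1d G y = 1 := hy
    unfold norm1d at hx' hy' ⊢
    calc ∑ i, dd G i * |w i|
        = t * (∑ i, dd G i * |x i|) + (1 - t) * (∑ i, dd G i * |y i|) := by
          rw [Finset.mul_sum, Finset.mul_sum, ← Finset.sum_add_distrib]
          exact Finset.sum_congr rfl fun i _ => by rw [habs i]; ring
      _ = 1 := by rw [hx', hy']; ring
  have hwle : ∀ i j, x i < x j → w i ≤ w j := by
    intro i j h
    have hyij := (horder i j).2 h
    simp only [hwdef]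
    nlinarith
  have hweq : ∀ i j, x i = x j → w i = w j := by
    intro i j h
    have hyij := (horder i j).1 h
    simp only [hwdef, h, hyij]
  refine ⟨hnorm, hnorm, ?_⟩
  obtain ⟨_, z, hz1, hz2, hz3⟩ := hpair
  refine ⟨z, ?_, hz2, ?_⟩
  · intro i j hadj
    have hzm := hz1 i j hadj
    rcases lt_trichotomy (x i) (x j) with h | h | h
    · have hz : z i j = -1 := by
        unfold sgnSet at hzm
        rw [if_neg (by linarith), if_pos (by linarith)] at hzm
        simpa using hzm
      rw [hz]
      exact neg_one_mem_sgnSet (by linarith [hwle i j h])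
    · have := hweq i j h
      unfold sgnSet at hzm ⊢
      rw [sub_eq_zero.mpr h] at hzm
      rw [sub_eq_zero.mpr this]
      simpa using hzm
    · have hz : z i j = 1 := by
        unfold sgnSet at hzm
        rw [if_pos (by linarith)] at hzm
        simpa using hzm
      rw [hz]
      exact one_mem_sgnSet (by linarith [hwle j i h])
  · intro i
    obtain ⟨s, hs, hsum⟩ := hz3 i
    rcases lt_trichotomy (x i) 0 with h | h | h
    · have hs' : s = -1 := by
        unfold sgnSet at hs
        rw [if_neg (by linarith), if_pos h] at hs
        simpa using hs
      have hyi := (hsign i).2.1 h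
      have hwi : w i ≤ 0 := by simp only [hwdef]; nlinarith
      exact ⟨s, hs' ▸ neg_one_mem_sgnSet hwi, hsum⟩
    · have hyi := (hsign i).1 h
      have hwi : w i = 0 := by simp [hwdef, h, hyi]
      refine ⟨s, ?_, hsum⟩
      unfold sgnSet at hs ⊢
      rw [h] at hs
      rw [hwi]
      simpa using hs
    · have hs' : s = 1 := by
        unfold sgnSet at hs
        rw [if_pos h] at hs
        simpa using hs
      have hyi := (hsign i).2.2 h
      have hwi : 0 ≤ w i := by simp only [hwdef]; nlinarith
      exact ⟨s, hs' ▸ one_mem_sgnSet hwi, hsum⟩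
end

section
/- Every eigenvalue μ of the graph 1-Laplacian Δ₁ satisfies 0 ≤ μ ≤ 1. -/
open Finset

lemma sgn_mul {t s : ℝ} (hs : s ∈ sgnSet t) : t * s = |t| := by
  unfold sgnSet at hs
  split_ifs at hs with h1 h2
  · simp only [Set.mem_singleton_iff] at hs
    subst hs; rw [abs_of_pos h1, mul_one]
  · simp only [Set.mem_singleton_iff] at hs
    subst hs; rw [abs_of_neg h2]; ring
  · have ht : t = 0 := le_antisymm (not_lt.1 h1) (not_lt.1 h2)
    subst ht; simp

lemma swap_sum {n : ℕ} (G : SimpleGraph (Fin n)) [DecidableRel G.Adj] (g : Fin n → Fin n → ℝ) :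
    ∑ i, ∑ j ∈ G.neighborFinset i, g i j = ∑ i, ∑ j ∈ G.neighborFinset i, g j i := by
  have h : ∀ (f : Fin n → Fin n → ℝ), (∑ i, ∑ j ∈ G.neighborFinset i, f i j)
      = ∑ i, ∑ j, if G.Adj i j then f i j else 0 := by
    intro f
    refine Finset.sum_congr rfl fun i _ => ?_
    rw [← Finset.sum_filter]
    refine Finset.sum_congr ?_ (fun _ _ => rfl)
    ext j; simp [SimpleGraph.mem_neighborFinset]
  rw [h, h, Finset.sum_comm]
  refine Finset.sum_congr rfl fun i _ => Finset.sum_congr rfl fun j _ => ?_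
  by_cases hadj : G.Adj i j
  · simp [hadj, hadj.symm]
  · have h2 : ¬ G.Adj j i := fun hh => hadj hh.symm
    simp [hadj, h2]

/-- Every eigenvalue `μ` of the graph 1-Laplacian satisfies `0 ≤ μ ≤ 1`. -/
theorem stmt7 {n : ℕ} (G : SimpleGraph (Fin n)) [DecidableRel G.Adj]
    (hd : ∀ i, 0 < dd G i) (μ : ℝ) (h : ∃ x : Fin n → ℝ, IsEigenpair G μ x) :
    0 ≤ μ ∧ μ ≤ 1  := by
  obtain ⟨x, hx, z, hz1, hz2, hz3⟩ := h
  choose s hs heq using hz3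
  simp only [norm1d] at hx
  have hxs : ∀ i, x i * s i = |x i| := fun i => sgn_mul (hs i)
  have hT : (∑ i, ∑ j ∈ G.neighborFinset i, z i j * x i) = μ := by
    calc (∑ i, ∑ j ∈ G.neighborFinset i, z i j * x i)
        = ∑ i, x i * (μ * dd G i * s i) := by
          refine Finset.sum_congr rfl fun i _ => ?_
          rw [← Finset.sum_mul, heq i, mul_comm]
      _ = μ * ∑ i, dd G i * |x i| := by
          rw [Finset.mul_sum]
          refine Finset.sum_congr rfl fun i _ => ?_
          rw [← hxs i]; ring
      _ = μ := by rw [hx, mul_one]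
  have h2T : (2 : ℝ) * μ = ∑ i, ∑ j ∈ G.neighborFinset i, |x i - x j| := by
    have hswap := swap_sum G (fun i j => z i j * x i)
    calc (2 : ℝ) * μ = (∑ i, ∑ j ∈ G.neighborFinset i, z i j * x i)
          + ∑ i, ∑ j ∈ G.neighborFinset i, z j i * x j := by
            rw [← hswap, hT]; ring
      _ = ∑ i, ∑ j ∈ G.neighborFinset i, (z i j * x i + z j i * x j) := by
            rw [← Finset.sum_add_distrib]
            exact Finset.sum_congr rfl fun i _ => (Finset.sum_add_distrib).symm
      _ = ∑ i, ∑ j ∈ G.neighborFinset i, |x i - x j| := by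
            refine Finset.sum_congr rfl fun i _ => Finset.sum_congr rfl fun j hj => ?_
            rw [SimpleGraph.mem_neighborFinset] at hj
            rw [hz2 i j hj]
            have := sgn_mul (hz1 i j hj)
            calc z i j * x i + -z i j * x j = (x i - x j) * z i j := by ring
              _ = |x i - x j| := this
  have habs_nonneg : (0:ℝ) ≤ ∑ i, ∑ j ∈ G.neighborFinset i, |x i - x j| :=
    Finset.sum_nonneg fun i _ => Finset.sum_nonneg fun j _ => abs_nonneg _
  constructor
  · nlinarith [h2T, habs_nonneg]
  · have hub : (∑ i, ∑ j ∈ G.neighborFinset i, |x i - x j|) ≤ 2 := by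
      have h1 : (∑ i, ∑ j ∈ G.neighborFinset i, |x i - x j|)
          ≤ ∑ i, ∑ j ∈ G.neighborFinset i, (|x i| + |x j|) := by
        refine Finset.sum_le_sum fun i _ => Finset.sum_le_sum fun j _ => ?_
        exact abs_sub _ _
      have hsw := swap_sum G (fun i j => |x j|)
      have hdeg : ∀ i : Fin n, (∑ j ∈ G.neighborFinset i, |x i|) = dd G i * |x i| := by
        intro i
        rw [Finset.sum_const, SimpleGraph.card_neighborFinset_eq_degree, dd, nsmul_eq_mul]
      have h2 : (∑ i, ∑ j ∈ G.neighborFinset i, (|x i| + |x j|)) = 2 := by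
        calc (∑ i, ∑ j ∈ G.neighborFinset i, (|x i| + |x j|))
            = (∑ i, ∑ j ∈ G.neighborFinset i, |x i|)
              + ∑ i, ∑ j ∈ G.neighborFinset i, |x j| := by
              rw [← Finset.sum_add_distrib]
              exact Finset.sum_congr rfl fun i _ => Finset.sum_add_distrib
          _ = (∑ i, dd G i * |x i|) + ∑ i, dd G i * |x i| := by
              rw [hsw]
              rw [Finset.sum_congr rfl fun i _ => hdeg i]
          _ = 2 := by rw [hx]; ring
      linarith [h1, h2]
    nlinarith [h2T, hub]
end

section
/- If μ and μ̃ are two distinct eigenvalues of the graph 1-Laplacian Δ₁ on a graph with n ≥ 2 vertices, then |μ − μ̃| ≥ 4/(n²(n−1)²). Consequently, Δ₁ has only finitely many eigenvalues. -/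
open Finset

lemma sgn_abs_le {t s : ℝ} (h : s ∈ sgnSet t) : |s| ≤ 1 := by
  unfold sgnSet at h
  split_ifs at h with h1 h2
  · simp only [Set.mem_singleton_iff] at h; simp [h]
  · simp only [Set.mem_singleton_iff] at h; simp [h]
  · rw [abs_le]; exact ⟨h.1, h.2⟩

lemma sgn_pos {t s : ℝ} (ht : 0 < t) (h : s ∈ sgnSet t) : s = 1 := by
  unfold sgnSet at h
  rw [if_pos ht] at h
  simpa using h

lemma sgn_neg_mem {t s : ℝ} (h : s ∈ sgnSet t) : -s ∈ sgnSet (-t) := by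
  unfold sgnSet at h ⊢
  rcases lt_trichotomy t 0 with h1 | h1 | h1
  · rw [if_neg (not_lt.mpr h1.le), if_pos h1] at h
    rw [if_pos (by linarith : (0:ℝ) < -t)]
    simp only [Set.mem_singleton_iff] at h ⊢
    rw [h]; norm_num
  · subst h1
    rw [if_neg (lt_irrefl (0:ℝ)), if_neg (lt_irrefl (0:ℝ))] at h
    rw [neg_zero, if_neg (lt_irrefl (0:ℝ)), if_neg (lt_irrefl (0:ℝ))]
    exact ⟨by linarith [h.2], by linarith [h.1]⟩
  · rw [if_pos h1] at h
    rw [if_neg (by linarith : ¬ (0:ℝ) < -t), if_pos (by linarith : -t < 0)]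
    simp only [Set.mem_singleton_iff] at h ⊢
    rw [h]

lemma eigen_neg {n : ℕ} (G : SimpleGraph (Fin n)) [DecidableRel G.Adj] {μ : ℝ}
    {x : Fin n → ℝ} (h : IsEigenpair G μ x) : IsEigenpair G μ (-x) := by
  obtain ⟨hx, z, hz1, hz2, hz3⟩ := h
  refine ⟨?_, fun i j => z j i, ?_, ?_, ?_⟩
  · unfold norm1d at *; simpa using hx
  · intro i j hij
    have := hz1 j i hij.symm
    have e : (-x) i - (-x) j = x j - x i := by simp only [Pi.neg_apply]; ring
    rw [e]; exact this
  · intro i j hij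
    have := hz2 i j hij
    linarith
  · intro i
    obtain ⟨s, hs, he⟩ := hz3 i
    refine ⟨-s, by simpa only [Pi.neg_apply] using sgn_neg_mem hs, ?_⟩
    have : ∑ j ∈ G.neighborFinset i, z j i = -∑ j ∈ G.neighborFinset i, z i j := by
      rw [← Finset.sum_neg_distrib]
      exact Finset.sum_congr rfl fun j hj =>
        hz2 i j ((SimpleGraph.mem_neighborFinset G i j).mp hj)
    rw [this, he]; ring

/-- Core lemma: if `x` has a positive entry, the eigenvalue times the (integer)
volume of the positive part is an integer, with the stated size bounds. -/
lemma key {n : ℕ} (G : SimpleGraph (Fin n)) [DecidableRel G.Adj]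
    (hd : ∀ i, 0 < dd G i) {μ : ℝ} {x : Fin n → ℝ}
    (h : IsEigenpair G μ x) (hP : ∃ i, 0 < x i) :
    ∃ a b : ℕ, 0 < b ∧ a ≤ b ∧ b ≤ n * (n - 1) ∧ μ * b = a ∧
      (μ ≠ 0 → 2 * (b : ℝ) ≤ (n : ℝ) * ((n : ℝ) - 1)) := by
  classical
  obtain ⟨hx, z, hz1, hz2, hz3⟩ := h
  choose s hs hsum using hz3
  set P : Finset (Fin n) := univ.filter (fun i => 0 < x i) with hPdef
  set Q : Finset (Fin n) := univ.filter (fun i => ¬ 0 < x i) with hQdef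
  set F : Fin n → Fin n → ℝ := fun i j => if G.Adj i j then z i j else 0 with hFdef
  have hF : ∀ i j, F j i = -F i j := by
    intro i j
    by_cases hij : G.Adj i j
    · simp only [hFdef, if_pos hij, if_pos hij.symm]; exact hz2 i j hij
    · have : ¬ G.Adj j i := fun hc => hij hc.symm
      simp only [hFdef, if_neg hij, if_neg this, neg_zero]
  have hrow : ∀ i, ∑ j, F i j = μ * (G.degree i : ℝ) * s i := by
    intro i
    have e1 : ∑ j, F i j = ∑ j ∈ G.neighborFinset i, z i j := by
      rw [SimpleGraph.neighborFinset_eq_filter, Finset.sum_filter]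
    rw [e1, hsum i]; rfl
  have hzero : ∀ S : Finset (Fin n), ∑ i ∈ S, ∑ j ∈ S, F i j = 0 := by
    intro S
    have h1 : ∑ i ∈ S, ∑ j ∈ S, F i j = ∑ j ∈ S, ∑ i ∈ S, F i j := Finset.sum_comm
    have h2 : ∑ j ∈ S, ∑ i ∈ S, F i j = -∑ i ∈ S, ∑ j ∈ S, F i j := by
      rw [← Finset.sum_neg_distrib]
      refine Finset.sum_congr rfl fun j _ => ?_
      rw [← Finset.sum_neg_distrib]
      exact Finset.sum_congr rfl fun i _ => hF j i
    linarith
  have hsP : ∀ i ∈ P, s i = 1 := by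
    intro i hi
    exact sgn_pos (Finset.mem_filter.mp hi).2 (hs i)
  -- define a and b
  set b : ℕ := ∑ i ∈ P, G.degree i with hbdef
  set a : ℕ := ∑ i ∈ P, (Q.filter (G.Adj i)).card with hadef
  have hbcast : (b : ℝ) = ∑ i ∈ P, (G.degree i : ℝ) := by push_cast [hbdef]; rfl
  have hacast : (a : ℝ) = ∑ i ∈ P, ((Q.filter (G.Adj i)).card : ℝ) := by push_cast [hadef]; rfl
  -- main identity
  have cross : ∀ i ∈ P, ∑ j ∈ Q, F i j = ((Q.filter (G.Adj i)).card : ℝ) := by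
    intro i hi
    have hxi : 0 < x i := (Finset.mem_filter.mp hi).2
    have e1 : ∑ j ∈ Q, F i j = ∑ j ∈ Q, (if G.Adj i j then (1:ℝ) else 0) := by
      refine Finset.sum_congr rfl fun j hj => ?_
      have hxj : ¬ 0 < x j := (Finset.mem_filter.mp hj).2
      by_cases hij : G.Adj i j
      · have : (0:ℝ) < x i - x j := by
          have := not_lt.mp hxj; linarith
        simp only [hFdef, if_pos hij]
        exact sgn_pos this (hz1 i j hij)
      · simp [hFdef, hij]
    rw [e1, Finset.sum_boole]
  have main : μ * (b : ℝ) = (a : ℝ) := by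
    have e1 : ∑ i ∈ P, ∑ j, F i j = μ * (b : ℝ) := by
      rw [hbcast, Finset.mul_sum]
      refine Finset.sum_congr rfl fun i hi => ?_
      rw [hrow i, hsP i hi]; ring
    have e2 : ∀ i, ∑ j, F i j = ∑ j ∈ P, F i j + ∑ j ∈ Q, F i j := by
      intro i
      rw [hPdef, hQdef]
      exact (Finset.sum_filter_add_sum_filter_not univ (fun j => 0 < x j) (F i)).symm
    have e3 : ∑ i ∈ P, ∑ j, F i j = (∑ i ∈ P, ∑ j ∈ P, F i j) + ∑ i ∈ P, ∑ j ∈ Q, F i j := by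
      rw [← Finset.sum_add_distrib]
      exact Finset.sum_congr rfl fun i _ => e2 i
    rw [← e1, e3, hzero P, zero_add, hacast]
    exact Finset.sum_congr rfl cross
  -- b positive
  obtain ⟨i0, hi0⟩ := hP
  have hi0P : i0 ∈ P := Finset.mem_filter.mpr ⟨Finset.mem_univ _, hi0⟩
  have hdeg1 : ∀ i, 1 ≤ G.degree i := by
    intro i
    have := hd i
    unfold dd at this
    exact_mod_cast Nat.one_le_iff_ne_zero.mpr (by exact_mod_cast this.ne')
  have hbpos : 0 < b := by
    have : 1 ≤ b := le_trans (hdeg1 i0)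
      (Finset.single_le_sum (f := fun i => G.degree i) (fun i _ => Nat.zero_le _) hi0P)
    omega
  -- a ≤ b
  have hab : a ≤ b := by
    refine Finset.sum_le_sum fun i _ => ?_
    have h1 : (Q.filter (G.Adj i)).card ≤ (univ.filter (G.Adj i)).card :=
      Finset.card_le_card (Finset.filter_subset_filter _ (Finset.subset_univ _))
    have h2 : (univ.filter (G.Adj i)).card = G.degree i := by
      rw [← SimpleGraph.neighborFinset_eq_filter]; rfl
    omega
  -- degree bound
  have hdegn : ∀ i, G.degree i ≤ n - 1 := by
    intro i
    have := G.degree_lt_card_verts i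
    simp only [Fintype.card_fin] at this
    omega
  have hbn : b ≤ n * (n - 1) := by
    calc b ≤ ∑ i ∈ P, (n - 1) := Finset.sum_le_sum fun i _ => hdegn i
      _ ≤ ∑ _i : Fin n, (n - 1) := Finset.sum_le_sum_of_subset (Finset.subset_univ _)
      _ = n * (n - 1) := by simp [Finset.sum_const, Fintype.card_fin, mul_comm]
  -- the μ ≠ 0 bound
  refine ⟨a, b, hbpos, hab, hbn, main, ?_⟩
  intro hμ
  have htot : ∑ i, ∑ j, F i j = 0 := by
    simpa using hzero univ
  have htot2 : μ * ∑ i, (G.degree i : ℝ) * s i = 0 := by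
    rw [Finset.mul_sum, ← htot]
    exact Finset.sum_congr rfl fun i _ => by rw [hrow i]; ring
  have hTs : ∑ i, (G.degree i : ℝ) * s i = 0 := by
    rcases mul_eq_zero.mp htot2 with h | h
    · exact absurd h hμ
    · exact h
  have hsplit : ∑ i ∈ P, (G.degree i : ℝ) * s i + ∑ i ∈ Q, (G.degree i : ℝ) * s i = 0 := by
    rw [hPdef, hQdef, Finset.sum_filter_add_sum_filter_not]; exact hTs
  have hPs : ∑ i ∈ P, (G.degree i : ℝ) * s i = (b : ℝ) := by
    rw [hbcast]
    exact Finset.sum_congr rfl fun i hi => by rw [hsP i hi, mul_one]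
  have hQb : |∑ i ∈ Q, (G.degree i : ℝ) * s i| ≤ ∑ i ∈ Q, (G.degree i : ℝ) := by
    refine le_trans (Finset.abs_sum_le_sum_abs _ _) (Finset.sum_le_sum fun i _ => ?_)
    rw [abs_mul, abs_of_nonneg (by positivity : (0:ℝ) ≤ (G.degree i : ℝ))]
    nlinarith [sgn_abs_le (hs i), abs_nonneg (s i), (Nat.cast_nonneg (G.degree i) : (0:ℝ) ≤ _)]
  have hbQ : (b : ℝ) ≤ ∑ i ∈ Q, (G.degree i : ℝ) := by
    have h1 : (b : ℝ) = -∑ i ∈ Q, (G.degree i : ℝ) * s i := by rw [← hPs]; linarith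
    have h2 : (b:ℝ) ≤ |∑ i ∈ Q, (G.degree i : ℝ) * s i| := by
      rw [h1]; exact neg_le_abs _
    linarith
  have hPQ : (b : ℝ) + ∑ i ∈ Q, (G.degree i : ℝ) = ∑ i, (G.degree i : ℝ) := by
    rw [hbcast, hPdef, hQdef, Finset.sum_filter_add_sum_filter_not]
  have hδ : ∑ i, (G.degree i : ℝ) ≤ (n : ℝ) * ((n : ℝ) - 1) := by
    have hh : ∀ i : Fin n, (G.degree i : ℝ) ≤ (n : ℝ) - 1 := by
      intro i
      have h1 : G.degree i + 1 ≤ n := by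
        have := G.degree_lt_card_verts i
        simp only [Fintype.card_fin] at this
        omega
      have : (G.degree i : ℝ) + 1 ≤ (n : ℝ) := by exact_mod_cast h1
      linarith
    calc ∑ i, (G.degree i : ℝ) ≤ ∑ _i : Fin n, ((n:ℝ) - 1) := Finset.sum_le_sum fun i _ => hh i
      _ = (n : ℝ) * ((n:ℝ) - 1) := by
        rw [Finset.sum_const, Finset.card_univ, Fintype.card_fin, nsmul_eq_mul]
  linarith

lemma keyC {n : ℕ} (G : SimpleGraph (Fin n)) [DecidableRel G.Adj]
    (hd : ∀ i, 0 < dd G i) {μ : ℝ}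
    (h : ∃ x, IsEigenpair G μ x) :
    ∃ a b : ℕ, 0 < b ∧ a ≤ b ∧ b ≤ n * (n - 1) ∧ μ * b = a ∧
      (μ ≠ 0 → 2 * (b : ℝ) ≤ (n : ℝ) * ((n : ℝ) - 1)) := by
  obtain ⟨x, hx⟩ := h
  by_cases hP : ∃ i, 0 < x i
  · exact key G hd hx hP
  · have hP' : ∃ i, 0 < (-x) i := by
      by_contra hc
      push_neg at hP hc
      have hx0 : ∀ i, x i = 0 := by
        intro i
        have h1 := hP i
        have h2 := hc i
        simp only [Pi.neg_apply] at h2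
        linarith
      have h3 := hx.1
      unfold norm1d at h3
      simp [hx0] at h3
    exact key G hd (eigen_neg G hx) hP'

lemma gapzero {M : ℝ} (hM2 : 2 ≤ M) {ν : ℝ} {c e : ℕ} (he : 0 < e)
    (h : ν * e = c) (h2 : 2 * (e : ℝ) ≤ M) (hν : ν ≠ 0) : 4 / M ^ 2 ≤ |ν| := by
  have he' : (0:ℝ) < e := by exact_mod_cast he
  have hc0 : (1:ℝ) ≤ (c : ℝ) := by
    have hcne : c ≠ 0 := by
      rintro rfl
      simp only [Nat.cast_zero] at h
      rcases mul_eq_zero.mp h with h' | h'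
      · exact hν h'
      · exact absurd h' (by positivity)
    exact_mod_cast Nat.one_le_iff_ne_zero.mpr hcne
  have habs : |ν| * (e : ℝ) = (c : ℝ) := by
    rw [← abs_of_nonneg (Nat.cast_nonneg e : (0:ℝ) ≤ (e:ℝ)), ← abs_mul, h,
      abs_of_nonneg (Nat.cast_nonneg c)]
  have hM4e : 4 * (e:ℝ) ≤ M ^ 2 := by
    nlinarith [mul_nonneg (by linarith : (0:ℝ) ≤ M) (by linarith : (0:ℝ) ≤ M - 2)]
  have h4 : 4 ≤ |ν| * M ^ 2 := by
    nlinarith [mul_nonneg (abs_nonneg ν) (sub_nonneg.mpr hM4e)]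
  rw [div_le_iff₀ (by nlinarith : (0:ℝ) < M ^ 2)]
  linarith

/-- Two distinct eigenvalues of `Δ₁` on a graph with `n ≥ 2` vertices differ by at least
`4 / (n²(n−1)²)`; consequently `Δ₁` has only finitely many eigenvalues. -/
theorem stmt8 {n : ℕ} (G : SimpleGraph (Fin n)) [DecidableRel G.Adj]
    (hd : ∀ i, 0 < dd G i) (hn : 2 ≤ n) :
    (∀ μ ν : ℝ, (∃ x : Fin n → ℝ, IsEigenpair G μ x) →
      (∃ x : Fin n → ℝ, IsEigenpair G ν x) → μ ≠ ν →
      4 / ((n : ℝ)^2 * ((n : ℝ) - 1)^2) ≤ |μ - ν|) ∧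
    {μ : ℝ | ∃ x : Fin n → ℝ, IsEigenpair G μ x}.Finite := by
  constructor
  · intro μ ν hμ hν hne
    obtain ⟨a, b, hb, hab, hbn, hmain, hμb⟩ := keyC G hd hμ
    obtain ⟨c, e, he, hce, hen, hmain', hνe⟩ := keyC G hd hν
    set M : ℝ := (n : ℝ) * ((n : ℝ) - 1) with hM
    have hn2 : (2:ℝ) ≤ (n:ℝ) := by exact_mod_cast hn
    have hM2 : 2 ≤ M := by nlinarith
    have hMM : (n:ℝ)^2 * ((n:ℝ)-1)^2 = M ^ 2 := by rw [hM]; ring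
    rw [hMM]
    have hb' : (0:ℝ) < (b:ℝ) := by exact_mod_cast hb
    have he' : (0:ℝ) < (e:ℝ) := by exact_mod_cast he
    by_cases hμ0 : μ = 0
    · have hν0 : ν ≠ 0 := fun hc => hne (by rw [hμ0, hc])
      have := gapzero hM2 he hmain' (hνe hν0) hν0
      rw [hμ0, zero_sub, abs_neg]
      exact this
    · by_cases hν0 : ν = 0
      · have := gapzero hM2 hb hmain (hμb hμ0) hμ0
        rw [hν0, sub_zero]
        exact this
      · -- both nonzero
        have h2b := hμb hμ0
        have h2e := hνe hν0
        have key1 : (μ - ν) * ((b:ℝ) * e) = (a:ℝ) * e - (c:ℝ) * b := by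
          calc (μ - ν) * ((b:ℝ) * e) = (μ * b) * e - (ν * e) * b := by ring
            _ = (a:ℝ) * e - (c:ℝ) * b := by rw [hmain, hmain']
        have hne2 : a * e ≠ c * b := by
          intro hcon
          apply hne
          have hcast : (a:ℝ) * e = (c:ℝ) * b := by exact_mod_cast congrArg (Nat.cast : ℕ → ℝ) hcon
          have h1 : μ * ((b:ℝ) * e) = ν * ((b:ℝ) * e) := by
            calc μ * ((b:ℝ) * e) = (μ * b) * e := by ring
              _ = (a:ℝ) * e := by rw [hmain]
              _ = (c:ℝ) * b := hcast
              _ = (ν * e) * b := by rw [hmain']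
              _ = ν * ((b:ℝ) * e) := by ring
          exact mul_right_cancel₀ (by positivity) h1
        have hint : (1:ℝ) ≤ |(a:ℝ) * e - (c:ℝ) * b| := by
          have h2 : (a:ℤ) * e - (c:ℤ) * b ≠ 0 := by
            intro hcon
            apply hne2
            have : (a:ℤ) * e = (c:ℤ) * b := by linarith
            exact_mod_cast this
          have h3 : (1:ℤ) ≤ |(a:ℤ) * e - (c:ℤ) * b| := Int.one_le_abs h2
          exact_mod_cast h3
        have hμν : |μ - ν| * ((b:ℝ) * e) = |(a:ℝ) * e - (c:ℝ) * b| := by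
          rw [← abs_of_pos (by positivity : (0:ℝ) < (b:ℝ) * e), ← abs_mul, key1]
        have h4be : 4 * ((b:ℝ) * e) ≤ M ^ 2 := by nlinarith
        have h4 : 4 ≤ |μ - ν| * M ^ 2 := by
          nlinarith [mul_nonneg (abs_nonneg (μ - ν)) (sub_nonneg.mpr h4be)]
        rw [div_le_iff₀ (by nlinarith : (0:ℝ) < M ^ 2)]
        linarith
  · have hsub : {μ : ℝ | ∃ x : Fin n → ℝ, IsEigenpair G μ x} ⊆
        ↑(((Finset.range (n*(n-1)+1)) ×ˢ (Finset.range (n*(n-1)+1))).image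
          (fun p => (p.1 : ℝ) / (p.2 : ℝ))) := by
      intro μ hμ
      obtain ⟨a, b, hb, hab, hbn, hmain, -⟩ := keyC G hd hμ
      have hbpos : (0:ℝ) < (b:ℝ) := by exact_mod_cast hb
      refine Finset.mem_coe.mpr (Finset.mem_image.mpr ⟨(a, b), ?_, ?_⟩)
      · rw [Finset.mem_product]
        constructor <;> rw [Finset.mem_range] <;> omega
      · rw [eq_comm, eq_div_iff (ne_of_gt hbpos)]
        exact hmain
    exact Set.Finite.subset (Finset.finite_toSet _) hsub
end

section
/- Let G be connected with n vertices. If x ∈ X has all coordinates equal, then x = ±(1/δ)(1,1,…,1) and x is an eigenvector of the graph 1-Laplacian Δ₁ with eigenvalue μ = 0. Conversely, every eigenvector x ∈ X of Δ₁ corresponding to the eigenvalue μ = 0 must equal ±(1/δ)(1,1,…,1). -/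
open Finset

lemma sgnSet_nonempty (t : ℝ) : ∃ s, s ∈ sgnSet t := by
  unfold sgnSet
  split_ifs with h1 h2
  · exact ⟨1, rfl⟩
  · exact ⟨-1, rfl⟩
  · exact ⟨0, by constructor <;> norm_num⟩

lemma const_case {n : ℕ} (G : SimpleGraph (Fin n)) [DecidableRel G.Adj]
    (hne : Nonempty (Fin n)) (x : Fin n → ℝ) (hn : norm1d G x = 1)
    (hc : ∀ i j, x i = x j) :
    (x = fun _ => 1 / deltaTot G) ∨ (x = fun _ => -(1 / deltaTot G)) := by
  obtain ⟨i0⟩ := hne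
  have heq : deltaTot G * |x i0| = 1 := by
    rw [← hn]
    unfold norm1d deltaTot
    rw [Finset.sum_mul]
    exact Finset.sum_congr rfl fun i _ => by rw [hc i i0]
  have hd0 : (0:ℝ) ≤ deltaTot G := by
    unfold deltaTot dd
    positivity
  have hdne : deltaTot G ≠ 0 := by
    intro h; rw [h] at heq; simp at heq
  have habs : |x i0| = 1 / deltaTot G := by
    field_simp
    linarith [heq]
  rcases abs_eq (by positivity : (0:ℝ) ≤ 1 / deltaTot G) |>.mp habs with h | h
  · left; funext i; rw [hc i i0, h]
  · right; funext i; rw [hc i i0, h]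

lemma const_eigen {n : ℕ} (G : SimpleGraph (Fin n)) [DecidableRel G.Adj]
    (x : Fin n → ℝ) (hn : norm1d G x = 1) (hc : ∀ i j, x i = x j) :
    IsEigenpair G 0 x := by
  refine ⟨hn, fun _ _ => 0, ?_, ?_, ?_⟩
  · intro i j _
    have : x i - x j = 0 := by rw [hc i j]; ring
    rw [this]
    unfold sgnSet
    simp
  · intro i j _; ring
  · intro i
    obtain ⟨s, hs⟩ := sgnSet_nonempty (x i)
    exact ⟨s, hs, by simp⟩

/-- For connected `G`: any `x ∈ X` with all coordinates equal is `±(1/δ)(1,…,1)` and is an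
eigenvector of `Δ₁` with eigenvalue `0`; conversely, every eigenvector of `Δ₁` with
eigenvalue `0` equals `±(1/δ)(1,…,1)`. -/
theorem stmt10 {n : ℕ} (G : SimpleGraph (Fin n)) [DecidableRel G.Adj]
    (hG : G.Connected) :
    (∀ x : Fin n → ℝ, x ∈ Xset G → (∀ i j, x i = x j) →
      ((x = fun _ => 1 / deltaTot G) ∨ (x = fun _ => -(1 / deltaTot G))) ∧
        IsEigenpair G 0 x) ∧
    (∀ x : Fin n → ℝ, IsEigenpair G 0 x →
      (x = fun _ => 1 / deltaTot G) ∨ (x = fun _ => -(1 / deltaTot G))) := by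
  have hne : Nonempty (Fin n) := hG.nonempty
  constructor
  · intro x hx hc
    exact ⟨const_case G hne x hx hc, const_eigen G x hx hc⟩
  · intro x hx
    obtain ⟨hn, z, hmem, hanti, hsum⟩ := hx
    -- each vertex sum is zero
    have hzero : ∀ i, ∑ j ∈ G.neighborFinset i, z i j = 0 := by
      intro i
      obtain ⟨s, _, hs⟩ := hsum i
      rw [hs]; ring
    -- maximizer
    obtain ⟨i0, _, hmax⟩ :=
      Finset.exists_max_image (Finset.univ : Finset (Fin n)) x ⟨Classical.arbitrary _, Finset.mem_univ _⟩
    set M := x i0 with hM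
    have hle : ∀ i, x i ≤ M := fun i => hmax i (Finset.mem_univ i)
    set f : Fin n → Fin n → ℝ := fun i j => if G.Adj i j then z i j else 0 with hf
    have hfanti : ∀ i j, f j i = - f i j := by
      intro i j
      by_cases h : G.Adj i j
      · simp [hf, h, h.symm, hanti i j h]
      · have h' : ¬ G.Adj j i := fun hh => h hh.symm
        simp [hf, h, h']
    have hfzero : ∀ i, ∑ j, f i j = 0 := by
      intro i
      rw [← hzero i]
      rw [SimpleGraph.neighborFinset_eq_filter]
      rw [Finset.sum_filter]
    -- the set of maximizers
    set S : Finset (Fin n) := Finset.univ.filter (fun i => x i = M) with hS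
    have hA : ∑ i ∈ S, ∑ j ∈ S, f i j = 0 := by
      have h1 : ∑ i ∈ S, ∑ j ∈ S, f i j = ∑ i ∈ S, ∑ j ∈ S, f j i := Finset.sum_comm
      have h2 : ∑ i ∈ S, ∑ j ∈ S, f j i = - ∑ i ∈ S, ∑ j ∈ S, f i j := by
        rw [← Finset.sum_neg_distrib]
        exact Finset.sum_congr rfl fun i _ => by
          rw [← Finset.sum_neg_distrib]
          exact Finset.sum_congr rfl fun j _ => hfanti i j
      linarith [h1, h2]
    have hsplit : ∀ i, ∑ j, f i j =
        (∑ j ∈ S, f i j) + ∑ j ∈ Finset.univ.filter (fun j => ¬ (x j = M)), f i j := by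
      intro i
      rw [hS]
      exact (Finset.sum_filter_add_sum_filter_not Finset.univ _ _).symm
    have hC : ∑ i ∈ S, ∑ j ∈ Finset.univ.filter (fun j => ¬ (x j = M)), f i j = 0 := by
      have := Finset.sum_congr rfl (fun i (_ : i ∈ S) => hsplit i)
      rw [Finset.sum_add_distrib] at this
      have h0 : ∑ i ∈ S, ∑ j, f i j = 0 :=
        Finset.sum_eq_zero fun i _ => hfzero i
      rw [h0, hA] at this
      linarith
    -- cross terms are nonneg, and 1 when adjacent
    have hcross : ∀ i ∈ S, ∀ j ∈ Finset.univ.filter (fun j => ¬ (x j = M)),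
        f i j = if G.Adj i j then 1 else 0 := by
      intro i hi j hj
      rw [hS, Finset.mem_filter] at hi
      rw [Finset.mem_filter] at hj
      by_cases h : G.Adj i j
      · have hlt : x j < M := lt_of_le_of_ne (hle j) hj.2
        have hpos : 0 < x i - x j := by rw [hi.2]; linarith
        have := hmem i j h
        unfold sgnSet at this
        rw [if_pos hpos] at this
        simp only [Set.mem_singleton_iff] at this
        simp [hf, h, this]
      · simp [hf, h]
    have hnonadj : ∀ i ∈ S, ∀ j, ¬ (x j = M) → ¬ G.Adj i j := by
      intro i hi j hj hadj
      have hterm : ∀ i' ∈ S, ∀ j' ∈ Finset.univ.filter (fun j => ¬ (x j = M)),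
          (0:ℝ) ≤ f i' j' := by
        intro i' hi' j' hj'
        rw [hcross i' hi' j' hj']
        split_ifs <;> norm_num
      have hallzero : ∀ i' ∈ S, ∑ j' ∈ Finset.univ.filter (fun j => ¬ (x j = M)), f i' j' = 0 := by
        have := (Finset.sum_eq_zero_iff_of_nonneg
          (fun i' hi' => Finset.sum_nonneg (fun j' hj' => hterm i' hi' j' hj'))).mp hC
        exact this
      have := (Finset.sum_eq_zero_iff_of_nonneg (fun j' hj' => hterm i hi j' hj')).mp
        (hallzero i hi) j (Finset.mem_filter.mpr ⟨Finset.mem_univ j, hj⟩)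
      rw [hcross i hi j (Finset.mem_filter.mpr ⟨Finset.mem_univ j, hj⟩)] at this
      rw [if_pos hadj] at this
      norm_num at this
    have hclosed : ∀ i j, x i = M → G.Adj i j → x j = M := by
      intro i j hi hadj
      by_contra hj
      exact hnonadj i (Finset.mem_filter.mpr ⟨Finset.mem_univ i, hi⟩) j hj hadj
    have hconstM : ∀ j, x j = M := by
      have H : ∀ (a b : Fin n), ∀ _ : G.Walk a b, x a = M → x b = M := by
        intro a b w
        induction w with
        | nil => exact id
        | cons h p ih => intro ha; exact ih (hclosed _ _ ha h)
      intro j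
      obtain ⟨w⟩ := hG.preconnected i0 j
      exact H i0 j w rfl
    exact const_case G hne x hn (fun i j => by rw [hconstM i, hconstM j])
end

section
/- Any eigenvector x ∈ X of the graph 1-Laplacian Δ₁ corresponding to an eigenvalue μ ≠ 0 lies on π, i.e., satisfies |δ₊(x) − δ₋(x)| ≤ δ₀(x). -/
open Finset

/-- Any eigenvector `x ∈ X` of `Δ₁` with eigenvalue `μ ≠ 0` lies on `π`, i.e. satisfies
`|δ₊(x) − δ₋(x)| ≤ δ₀(x)`. -/
theorem stmt11 {n : ℕ} (G : SimpleGraph (Fin n)) [DecidableRel G.Adj]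
    (hd : ∀ i, 0 < dd G i) (μ : ℝ) (x : Fin n → ℝ)
    (hpair : IsEigenpair G μ x) (hμ : μ ≠ 0) :
    |deltaP G x - deltaM G x| ≤ delta0 G x := by
  obtain ⟨hnorm, z, hz, hanti, h3⟩ := hpair
  choose s hs hsum using h3
  -- total sum of z over adjacent pairs is zero
  have hS : (∑ i, ∑ j, if G.Adj i j then z i j else 0) = 0 := by
    have h1 : (∑ i, ∑ j, if G.Adj i j then z i j else 0)
        = ∑ i, ∑ j, if G.Adj i j then -(z i j) else 0 := by
      rw [Finset.sum_comm]
      refine Finset.sum_congr rfl fun j _ => Finset.sum_congr rfl fun i _ => ?_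
      by_cases h : G.Adj i j
      · simp [h, h.symm, hanti i j h]
      · have h' : ¬ G.Adj j i := fun hh => h hh.symm
        simp [h, h']
    have h2 : (∑ i, ∑ j, if G.Adj i j then -(z i j) else 0)
        = -∑ i, ∑ j, if G.Adj i j then z i j else 0 := by
      rw [← Finset.sum_neg_distrib]
      refine Finset.sum_congr rfl fun i _ => ?_
      rw [← Finset.sum_neg_distrib]
      exact Finset.sum_congr rfl fun j _ => by by_cases h : G.Adj i j <;> simp [h]
    linarith [h1.trans h2]
  have hinner : ∀ i, (∑ j, if G.Adj i j then z i j else 0) = μ * dd G i * s i := by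
    intro i
    rw [← hsum i]
    rw [SimpleGraph.neighborFinset_eq_filter, Finset.sum_filter]
  have hsum0 : ∑ i, dd G i * s i = 0 := by
    have : μ * ∑ i, dd G i * s i = 0 := by
      rw [Finset.mul_sum]
      rw [← hS]
      exact Finset.sum_congr rfl fun i _ => by rw [hinner i]; ring
    rcases mul_eq_zero.mp this with h | h
    · exact absurd h hμ
    · exact h
  -- decompose
  have hdecomp : ∀ i, dd G i * s i =
      (if 0 < x i then dd G i else 0) - (if x i < 0 then dd G i else 0)
      + (if x i = 0 then dd G i * s i else 0) := by
    intro i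
    have hsi := hs i
    rcases lt_trichotomy (x i) 0 with h | h | h
    · have : s i = -1 := by
        simpa [sgnSet, not_lt.mpr h.le, h] using hsi
      simp [h, not_lt.mpr h.le, ne_of_lt h, this]
    · simp [h]
    · have : s i = 1 := by simpa [sgnSet, h] using hsi
      simp [h, not_lt.mpr h.le, ne_of_gt h, this]
  have key : deltaP G x - deltaM G x = -∑ i, (if x i = 0 then dd G i * s i else 0) := by
    have := Finset.sum_congr rfl (fun i (_ : i ∈ Finset.univ) => hdecomp i)
    rw [hsum0] at this
    rw [Finset.sum_add_distrib, Finset.sum_sub_distrib] at this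
    unfold deltaP deltaM
    linarith
  rw [key, abs_neg]
  calc |∑ i, (if x i = 0 then dd G i * s i else 0)|
      ≤ ∑ i, |if x i = 0 then dd G i * s i else 0| := Finset.abs_sum_le_sum_abs _ _
    _ ≤ delta0 G x := by
        unfold delta0
        refine Finset.sum_le_sum fun i _ => ?_
        by_cases h : x i = 0
        · have hsi : s i ∈ Set.Icc (-1 : ℝ) 1 := by simpa [sgnSet, h] using hs i
          have : |s i| ≤ 1 := abs_le.mpr ⟨hsi.1, hsi.2⟩
          rw [if_pos h, if_pos h, abs_mul, abs_of_pos (hd i)]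
          nlinarith [hd i]
        · simp [h]
end

section
/- Let G be connected and let (A, Aᶜ) be a Cheeger cut of G. If A is a disjoint union of two nonempty sets A₁ and A₂ with no edges between A₁ and A₂ (E(A₁,A₂) = ∅), then vol(A) ≤ vol(Aᶜ), and both (A₁, A₁ᶜ) and (A₂, A₂ᶜ) are Cheeger cuts with |∂A₁|/vol(A₁) = |∂A₂|/vol(A₂) = h(G). -/
open Finset

/-- `vol(A) = Σ_{i∈A} d_i`. -/
noncomputable def volA {n : ℕ} (G : SimpleGraph (Fin n)) [DecidableRel G.Adj]
    (A : Finset (Fin n)) : ℝ :=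
  ∑ i ∈ A, dd G i

/-- `|∂A|`: the number of edges with one endpoint in `A` and the other in `Aᶜ`
(counted as ordered pairs `(i, j)` with `i ∈ A`, `j ∉ A`, `i ∼ j`). -/
def bdryCard {n : ℕ} (G : SimpleGraph (Fin n)) [DecidableRel G.Adj]
    (A : Finset (Fin n)) : ℕ :=
  (Finset.univ.filter (fun p : Fin n × Fin n => p.1 ∈ A ∧ p.2 ∉ A ∧ G.Adj p.1 p.2)).card

/-- The cut ratio `|∂S| / min(vol(S), vol(Sᶜ))`. -/
noncomputable def cutRatio {n : ℕ} (G : SimpleGraph (Fin n)) [DecidableRel G.Adj]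
    (S : Finset (Fin n)) : ℝ :=
  (bdryCard G S : ℝ) / min (volA G S) (volA G Sᶜ)

/-- The Cheeger constant `h(G)`: the minimum of the cut ratio over nonempty proper subsets. -/
noncomputable def cheegerConst {n : ℕ} (G : SimpleGraph (Fin n)) [DecidableRel G.Adj] : ℝ :=
  sInf {r : ℝ | ∃ S : Finset (Fin n), S.Nonempty ∧ S ≠ Finset.univ ∧ r = cutRatio G S}

/-- `(A, Aᶜ)` is a Cheeger cut: `A` is nonempty and proper and its cut ratio equals `h(G)`. -/
def IsCheegerCut {n : ℕ} (G : SimpleGraph (Fin n)) [DecidableRel G.Adj]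
    (A : Finset (Fin n)) : Prop :=
  A.Nonempty ∧ A ≠ Finset.univ ∧ cutRatio G A = cheegerConst G

set_option linter.unusedSectionVars false

section helpers
variable {n : ℕ} (G : SimpleGraph (Fin n)) [DecidableRel G.Adj]

lemma compl_ne (S : Finset (Fin n)) (h : S ≠ univ) : Sᶜ.Nonempty := by
  rw [Finset.nonempty_iff_ne_empty]
  simpa [Finset.compl_eq_empty_iff] using h

lemma walk_cross {S : Finset (Fin n)} {i j : Fin n} (w : G.Walk i j) :
    i ∈ S → j ∉ S → ∃ a b, a ∈ S ∧ b ∉ S ∧ G.Adj a b := by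
  induction w with
  | nil => intro hi hj; exact absurd hi hj
  | @cons u v w' h p ih =>
    intro hi hj
    by_cases hb : v ∈ S
    · exact ih hb hj
    · exact ⟨u, v, hi, hb, h⟩

lemma exists_cross (hG : G.Connected) {S : Finset (Fin n)} (hS : S.Nonempty)
    (hS' : S ≠ univ) : ∃ a b, a ∈ S ∧ b ∉ S ∧ G.Adj a b := by
  obtain ⟨i, hi⟩ := hS
  obtain ⟨j, hj⟩ : ∃ j, j ∉ S := by
    obtain ⟨j, hj⟩ := compl_ne S hS'
    exact ⟨j, by simpa using hj⟩
  exact walk_cross G (hG.preconnected i j).some hi hj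

lemma dd_pos (hn : 2 ≤ n) (hG : G.Connected) (i : Fin n) : 0 < dd G i := by
  have : Nontrivial (Fin n) := Fin.nontrivial_iff_two_le.mpr hn
  obtain ⟨j, hj⟩ := exists_ne i
  have hne : ({i} : Finset (Fin n)) ≠ univ := by
    intro h
    have : j ∈ ({i} : Finset (Fin n)) := h.symm ▸ mem_univ j
    exact hj (by simpa using this)
  obtain ⟨a, b, ha, hb, hab⟩ := exists_cross G hG (singleton_nonempty i) hne
  have : a = i := by simpa using ha
  subst this
  have : 0 < G.degree a := (G.degree_pos_iff_exists_adj a).mpr ⟨b, hab⟩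
  unfold dd
  exact_mod_cast this

lemma volA_nonneg (S : Finset (Fin n)) : 0 ≤ volA G S :=
  Finset.sum_nonneg fun i _ => by unfold dd; positivity

lemma volA_pos (hn : 2 ≤ n) (hG : G.Connected) {S : Finset (Fin n)} (hS : S.Nonempty) :
    0 < volA G S := by
  obtain ⟨i, hi⟩ := hS
  exact Finset.sum_pos' (fun j _ => (dd_pos G hn hG j).le) ⟨i, hi, dd_pos G hn hG i⟩

lemma volA_mono {S T : Finset (Fin n)} (h : S ⊆ T) : volA G S ≤ volA G T :=
  Finset.sum_le_sum_of_subset_of_nonneg h fun i _ _ => by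
    unfold dd; positivity

lemma volA_union {S T : Finset (Fin n)} (h : Disjoint S T) :
    volA G (S ∪ T) = volA G S + volA G T := by
  unfold volA; rw [Finset.sum_union h]

lemma bdry_pos (hG : G.Connected) {S : Finset (Fin n)} (hS : S.Nonempty)
    (hS' : S ≠ univ) : (1 : ℝ) ≤ (bdryCard G S : ℝ) := by
  obtain ⟨a, b, ha, hb, hab⟩ := exists_cross G hG hS hS'
  have : 0 < bdryCard G S := Finset.card_pos.mpr ⟨(a, b), by simp [ha, hb, hab]⟩
  exact_mod_cast this

lemma cheeger_finite :
    {r : ℝ | ∃ S : Finset (Fin n), S.Nonempty ∧ S ≠ Finset.univ ∧ r = cutRatio G S}.Finite := by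
  have hsub : {r : ℝ | ∃ S : Finset (Fin n), S.Nonempty ∧ S ≠ Finset.univ ∧ r = cutRatio G S}
      ⊆ Set.range (cutRatio G) := by
    rintro r ⟨S, _, _, rfl⟩; exact ⟨S, rfl⟩
  exact (Set.finite_range _).subset hsub

lemma cheeger_le {S : Finset (Fin n)} (hS : S.Nonempty) (hS' : S ≠ univ) :
    cheegerConst G ≤ cutRatio G S :=
  csInf_le (cheeger_finite G).bddBelow ⟨S, hS, hS', rfl⟩

lemma cheeger_pos (hn : 2 ≤ n) (hG : G.Connected) {S₀ : Finset (Fin n)}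
    (hS₀ : S₀.Nonempty) (hS₀' : S₀ ≠ univ) : 0 < cheegerConst G := by
  have hne : {r : ℝ | ∃ S : Finset (Fin n), S.Nonempty ∧ S ≠ Finset.univ ∧ r = cutRatio G S}.Nonempty :=
    ⟨cutRatio G S₀, S₀, hS₀, hS₀', rfl⟩
  obtain ⟨S, hS, hS', hr⟩ := hne.csInf_mem (cheeger_finite G)
  rw [cheegerConst, hr, cutRatio]
  have hb := bdry_pos G hG hS hS'
  have hv1 : 0 < volA G S := volA_pos G hn hG hS
  have hv2 : 0 < volA G Sᶜ := volA_pos G hn hG (compl_ne S hS')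
  have : 0 < min (volA G S) (volA G Sᶜ) := lt_min hv1 hv2
  positivity

lemma bdry_split {A₁ A₂ : Finset (Fin n)} (hdisj : Disjoint A₁ A₂)
    (hnoedge : ∀ i ∈ A₁, ∀ j ∈ A₂, ¬ G.Adj i j) :
    bdryCard G (A₁ ∪ A₂) = bdryCard G A₁ + bdryCard G A₂ := by
  classical
  unfold bdryCard
  rw [← Finset.card_union_of_disjoint]
  · congr 1
    ext p
    simp only [mem_filter, mem_union, mem_univ, true_and]
    constructor
    · rintro ⟨h1 | h1, h2, h3⟩
      · exact Or.inl ⟨h1, fun hp => h2 (Or.inl hp), h3⟩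
      · exact Or.inr ⟨h1, fun hp => h2 (Or.inr hp), h3⟩
    · rintro (⟨h1, h2, h3⟩ | ⟨h1, h2, h3⟩)
      · refine ⟨Or.inl h1, ?_, h3⟩
        rintro (hp | hp)
        · exact h2 hp
        · exact hnoedge p.1 h1 p.2 hp h3
      · refine ⟨Or.inr h1, ?_, h3⟩
        rintro (hp | hp)
        · exact hnoedge p.2 hp p.1 h1 h3.symm
        · exact h2 hp
  · rw [Finset.disjoint_left]
    rintro p hp hq
    simp only [mem_filter] at hp hq
    exact (Finset.disjoint_left.mp hdisj hp.2.1 hq.2.1)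
end helpers

/-- The subgraph of `G` induced on `A` is connected. -/
def IndConnected {n : ℕ} (G : SimpleGraph (Fin n)) (A : Finset (Fin n)) : Prop :=
  (G.induce (A : Set (Fin n))).Connected

/-- If `(A, Aᶜ)` is a Cheeger cut of a connected graph and `A = A₁ ⊔ A₂` with `A₁, A₂`
nonempty and no edges between them, then `vol(A) ≤ vol(Aᶜ)`, and `(A₁, A₁ᶜ)`, `(A₂, A₂ᶜ)`
are also Cheeger cuts with `|∂A₁|/vol(A₁) = |∂A₂|/vol(A₂) = h(G)`. -/
theorem stmt12 {n : ℕ} (G : SimpleGraph (Fin n)) [DecidableRel G.Adj]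
    (hn : 2 ≤ n) (hG : G.Connected) (A A₁ A₂ : Finset (Fin n))
    (hA : IsCheegerCut G A) (hunion : A = A₁ ∪ A₂) (hdisj : Disjoint A₁ A₂)
    (h1 : A₁.Nonempty) (h2 : A₂.Nonempty)
    (hnoedge : ∀ i ∈ A₁, ∀ j ∈ A₂, ¬ G.Adj i j) :
    volA G A ≤ volA G Aᶜ ∧
    IsCheegerCut G A₁ ∧ IsCheegerCut G A₂ ∧
    (bdryCard G A₁ : ℝ) / volA G A₁ = cheegerConst G ∧
    (bdryCard G A₂ : ℝ) / volA G A₂ = cheegerConst G := by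
  unfold IsCheegerCut at hA
  obtain ⟨hAne, hAuniv, hAcut⟩ := hA
  set h := cheegerConst G with hh
  have hA1sub : A₁ ⊆ A := hunion ▸ Finset.subset_union_left
  have hA2sub : A₂ ⊆ A := hunion ▸ Finset.subset_union_right
  have hA1univ : A₁ ≠ univ := fun he => hAuniv (Finset.univ_subset_iff.mp (he ▸ hA1sub))
  have hA2univ : A₂ ≠ univ := fun he => hAuniv (Finset.univ_subset_iff.mp (he ▸ hA2sub))
  have hbsum : (bdryCard G A : ℝ) = (bdryCard G A₁ : ℝ) + (bdryCard G A₂ : ℝ) := by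
    rw [hunion, bdry_split G hdisj hnoedge]; push_cast; ring
  have hvsum : volA G A = volA G A₁ + volA G A₂ := by rw [hunion, volA_union G hdisj]
  have hv1 : 0 < volA G A₁ := volA_pos G hn hG h1
  have hv2 : 0 < volA G A₂ := volA_pos G hn hG h2
  have hvA : 0 < volA G A := volA_pos G hn hG hAne
  have hvc : 0 < volA G Aᶜ := volA_pos G hn hG (compl_ne A hAuniv)
  have hvc1 : 0 < volA G A₁ᶜ := volA_pos G hn hG (compl_ne A₁ hA1univ)
  have hvc2 : 0 < volA G A₂ᶜ := volA_pos G hn hG (compl_ne A₂ hA2univ)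
  have hc1 : volA G Aᶜ ≤ volA G A₁ᶜ := volA_mono G (Finset.compl_subset_compl.mpr hA1sub)
  have hc2 : volA G Aᶜ ≤ volA G A₂ᶜ := volA_mono G (Finset.compl_subset_compl.mpr hA2sub)
  have hpos : 0 < h := cheeger_pos G hn hG hAne hAuniv
  have hle1 : h ≤ cutRatio G A₁ := cheeger_le G h1 hA1univ
  have hle2 : h ≤ cutRatio G A₂ := cheeger_le G h2 hA2univ
  have hvol : volA G A ≤ volA G Aᶜ := by
    by_contra hlt
    push_neg at hlt
    have hmin : min (volA G A) (volA G Aᶜ) = volA G Aᶜ := min_eq_right hlt.le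
    have hbA : (bdryCard G A : ℝ) = h * volA G Aᶜ := by
      have := hAcut
      rw [cutRatio, hmin] at this
      exact (div_eq_iff hvc.ne').mp this
    set m₁ := min (volA G A₁) (volA G A₁ᶜ) with hm₁
    set m₂ := min (volA G A₂) (volA G A₂ᶜ) with hm₂
    have hm1pos : 0 < m₁ := lt_min hv1 hvc1
    have hm2pos : 0 < m₂ := lt_min hv2 hvc2
    have hge1 : h * m₁ ≤ (bdryCard G A₁ : ℝ) := by
      rw [cutRatio] at hle1
      exact (le_div_iff₀ hm1pos).mp hle1
    have hge2 : h * m₂ ≤ (bdryCard G A₂ : ℝ) := by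
      rw [cutRatio] at hle2
      exact (le_div_iff₀ hm2pos).mp hle2
    have e1 : min (volA G A₁) (volA G Aᶜ) ≤ m₁ := min_le_min le_rfl hc1
    have e2 : min (volA G A₂) (volA G Aᶜ) ≤ m₂ := min_le_min le_rfl hc2
    have hsum : volA G Aᶜ < m₁ + m₂ := by
      rcases min_cases (volA G A₁) (volA G Aᶜ) with ⟨q1, _⟩ | ⟨q1, _⟩ <;>
      rcases min_cases (volA G A₂) (volA G Aᶜ) with ⟨q2, _⟩ | ⟨q2, _⟩ <;>
      rw [q1] at e1 <;> rw [q2] at e2 <;> linarith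
    have : h * volA G Aᶜ < h * (m₁ + m₂) := mul_lt_mul_of_pos_left hsum hpos
    nlinarith
  have hbA : (bdryCard G A : ℝ) = h * volA G A := by
    have := hAcut
    rw [cutRatio, min_eq_left hvol] at this
    exact (div_eq_iff hvA.ne').mp this
  have hm1 : min (volA G A₁) (volA G A₁ᶜ) = volA G A₁ := by
    apply min_eq_left
    have := volA_mono G hA1sub
    linarith
  have hm2 : min (volA G A₂) (volA G A₂ᶜ) = volA G A₂ := by
    apply min_eq_left
    have := volA_mono G hA2sub
    linarith
  have hr1 : cutRatio G A₁ = (bdryCard G A₁ : ℝ) / volA G A₁ := by rw [cutRatio, hm1]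
  have hr2 : cutRatio G A₂ = (bdryCard G A₂ : ℝ) / volA G A₂ := by rw [cutRatio, hm2]
  have hge1 : h * volA G A₁ ≤ (bdryCard G A₁ : ℝ) := by
    rw [hr1] at hle1
    exact (le_div_iff₀ hv1).mp hle1
  have hge2 : h * volA G A₂ ≤ (bdryCard G A₂ : ℝ) := by
    rw [hr2] at hle2
    exact (le_div_iff₀ hv2).mp hle2
  have hexp : h * volA G A = h * volA G A₁ + h * volA G A₂ := by rw [hvsum]; ring
  have heq1 : (bdryCard G A₁ : ℝ) = h * volA G A₁ := by linarith
  have heq2 : (bdryCard G A₂ : ℝ) = h * volA G A₂ := by linarith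
  have hd1 : (bdryCard G A₁ : ℝ) / volA G A₁ = h := by
    rw [heq1]; field_simp
  have hd2 : (bdryCard G A₂ : ℝ) / volA G A₂ = h := by
    rw [heq2]; field_simp
  exact ⟨hvol, ⟨h1, hA1univ, by rw [hr1, hd1]⟩, ⟨h2, hA2univ, by rw [hr2, hd2]⟩, hd1, hd2⟩
end

section
/- Let G be connected. If (A, Aᶜ) is a Cheeger cut of G, then at least one of the induced subgraphs on A and on Aᶜ is connected. -/
open Finset

section Aux

set_option linter.unusedSectionVars false

variable {n : ℕ} (G : SimpleGraph (Fin n)) [DecidableRel G.Adj]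

lemma aux_deg_pos (hn : 2 ≤ n) (hG : G.Connected) (v : Fin n) : 0 < G.degree v := by
  rw [G.degree_pos_iff_exists_adj]
  have : ∃ w : Fin n, w ≠ v := by
    have : 1 < Fintype.card (Fin n) := by rw [Fintype.card_fin]; omega
    exact Fintype.exists_ne_of_one_lt_card this v
  obtain ⟨w, hw⟩ := this
  obtain ⟨p⟩ := hG.preconnected v w
  cases p with
  | nil => exact absurd rfl hw.symm
  | cons h _ => exact ⟨_, h⟩

lemma aux_vol_pos (hn : 2 ≤ n) (hG : G.Connected) {A : Finset (Fin n)} (hA : A.Nonempty) :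
    0 < volA G A := by
  apply Finset.sum_pos (fun i _ => ?_) hA
  have := aux_deg_pos G hn hG i
  unfold dd
  exact_mod_cast this

lemma aux_bdry_pos (hG : G.Connected) {A : Finset (Fin n)} (hA : A.Nonempty)
    (hA2 : A ≠ Finset.univ) : 0 < bdryCard G A := by
  obtain ⟨a, ha⟩ := hA
  obtain ⟨b, hb⟩ : ∃ b, b ∉ A := by
    by_contra h
    push_neg at h
    exact hA2 (Finset.eq_univ_iff_forall.2 h)
  obtain ⟨p⟩ := hG.preconnected a b
  obtain ⟨d, _, hd1, hd2⟩ := p.exists_boundary_dart (A : Set (Fin n)) (by simpa) (by simpa)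
  apply Finset.card_pos.2
  refine ⟨(d.fst, d.snd), ?_⟩
  simp only [Finset.mem_filter, Finset.mem_univ, true_and]
  exact ⟨by simpa using hd1, by simpa using hd2, d.adj⟩

lemma aux_decomp {A : Finset (Fin n)} (hA : A.Nonempty)
    (hnc : ¬ (G.induce (A : Set (Fin n))).Connected) :
    ∃ A₁ A₂ : Finset (Fin n), A₁.Nonempty ∧ A₂.Nonempty ∧ Disjoint A₁ A₂ ∧ A₁ ∪ A₂ = A ∧
      ∀ x ∈ A₁, ∀ y ∈ A₂, ¬ G.Adj x y := by
  classical
  obtain ⟨a, ha⟩ := hA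
  set H := G.induce (A : Set (Fin n)) with hH
  set A₁ : Finset (Fin n) := A.filter
    (fun x => ∃ hx : x ∈ A, H.Reachable ⟨a, by simpa using ha⟩ ⟨x, by simpa using hx⟩) with hA₁
  set A₂ : Finset (Fin n) := A \ A₁ with hA₂
  have hne : A₂.Nonempty := by
    by_contra h
    rw [Finset.not_nonempty_iff_eq_empty, Finset.sdiff_eq_empty_iff_subset] at h
    apply hnc
    rw [SimpleGraph.connected_iff]
    refine ⟨?_, ?_⟩
    · rintro ⟨x, hx⟩ ⟨y, hy⟩
      have hx' : x ∈ A₁ := h (by simpa using hx)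
      have hy' : y ∈ A₁ := h (by simpa using hy)
      obtain ⟨_, hrx⟩ := (Finset.mem_filter.1 hx').2
      obtain ⟨_, hry⟩ := (Finset.mem_filter.1 hy').2
      exact hrx.symm.trans hry
    · exact ⟨⟨a, by simpa using ha⟩⟩
  refine ⟨A₁, A₂, ⟨a, Finset.mem_filter.2 ⟨ha, ha, SimpleGraph.Reachable.refl _⟩⟩, hne,
    Finset.disjoint_sdiff, Finset.union_sdiff_of_subset (Finset.filter_subset _ _), ?_⟩
  intro x hx y hy hadj
  have hxA : x ∈ A := (Finset.filter_subset _ _) hx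
  have hyA : y ∈ A := (Finset.mem_sdiff.1 hy).1
  have : H.Adj ⟨x, by simpa using hxA⟩ ⟨y, by simpa using hyA⟩ := by
    simpa [hH] using hadj
  obtain ⟨_, hrx⟩ := (Finset.mem_filter.1 hx).2
  have : y ∈ A₁ := Finset.mem_filter.2 ⟨hyA, hyA, hrx.trans this.reachable⟩
  exact (Finset.mem_sdiff.1 hy).2 this

def auxE (X Y : Finset (Fin n)) : ℕ :=
  (Finset.univ.filter (fun p : Fin n × Fin n => p.1 ∈ X ∧ p.2 ∈ Y ∧ G.Adj p.1 p.2)).card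

lemma auxE_symm (X Y : Finset (Fin n)) : auxE G X Y = auxE G Y X := by
  apply Finset.card_bij (fun p _ => Prod.swap p)
  · rintro ⟨x, y⟩ hp
    simp only [Finset.mem_filter, Finset.mem_univ, true_and] at hp ⊢
    exact ⟨hp.2.1, hp.1, hp.2.2.symm⟩
  · rintro ⟨x, y⟩ _ ⟨x', y'⟩ _ h
    simpa [Prod.ext_iff] using congrArg Prod.swap h
  · rintro ⟨x, y⟩ hp
    simp only [Finset.mem_filter, Finset.mem_univ, true_and] at hp
    exact ⟨(y, x), by simp [Finset.mem_filter, hp.1, hp.2.1, hp.2.2.symm], rfl⟩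

lemma auxE_left (X₁ X₂ Y : Finset (Fin n)) (h : Disjoint X₁ X₂) :
    auxE G (X₁ ∪ X₂) Y = auxE G X₁ Y + auxE G X₂ Y := by
  unfold auxE
  rw [← Finset.card_union_of_disjoint, ← Finset.filter_or]
  · congr 1; ext p; simp [Finset.mem_union]; tauto
  · simp only [Finset.disjoint_left, Finset.mem_filter] at h ⊢
    rintro p ⟨_, h1, _⟩ ⟨_, h2, _⟩
    exact h h1 h2

lemma auxE_right (X Y₁ Y₂ : Finset (Fin n)) (h : Disjoint Y₁ Y₂) :
    auxE G X (Y₁ ∪ Y₂) = auxE G X Y₁ + auxE G X Y₂ := by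
  rw [auxE_symm, auxE_left G _ _ _ h, auxE_symm G Y₁, auxE_symm G Y₂]

lemma auxE_zero (X Y : Finset (Fin n)) (h : ∀ x ∈ X, ∀ y ∈ Y, ¬ G.Adj x y) :
    auxE G X Y = 0 := by
  unfold auxE
  rw [Finset.card_eq_zero, Finset.filter_eq_empty_iff]
  rintro p _ ⟨h1, h2, h3⟩
  exact h _ h1 _ h2 h3

lemma aux_bdry_eq (S : Finset (Fin n)) : bdryCard G S = auxE G S Sᶜ := by
  unfold bdryCard auxE
  congr 1
  ext p
  simp [Finset.mem_compl]

lemma aux_vol_union (X Y : Finset (Fin n)) (h : Disjoint X Y) :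
    volA G (X ∪ Y) = volA G X + volA G Y := by
  unfold volA
  exact Finset.sum_union h

lemma aux_cheeger_le (hn : 2 ≤ n) (hG : G.Connected) {S : Finset (Fin n)}
    (h1 : S.Nonempty) (h2 : S ≠ Finset.univ) : cheegerConst G ≤ cutRatio G S := by
  apply csInf_le
  · refine ⟨0, ?_⟩
    rintro r ⟨S', hS1, hS2, rfl⟩
    unfold cutRatio
    apply div_nonneg (by positivity)
    have hc : S'ᶜ.Nonempty := by
      obtain ⟨b, hb⟩ : ∃ b, b ∉ S' := by
        by_contra h; push_neg at h; exact hS2 (Finset.eq_univ_iff_forall.2 h)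
      exact ⟨b, Finset.mem_compl.2 hb⟩
    exact le_min (aux_vol_pos G hn hG hS1).le (aux_vol_pos G hn hG hc).le
  · exact ⟨S, h1, h2, rfl⟩

lemma aux_min (a₁ a₂ b₁ b₂ : ℝ) (h1:0<a₁) (h2:0<a₂) (h3:0<b₁) (h4:0<b₂) :
    min (a₁+a₂) (b₁+b₂) < min (a₁+b₁) (a₂+b₂) + min (a₁+b₂) (a₂+b₁) := by
  rcases min_cases (a₁+b₁) (a₂+b₂) with ⟨e,_⟩|⟨e,_⟩ <;>
    rcases min_cases (a₁+b₂) (a₂+b₁) with ⟨f,_⟩|⟨f,_⟩ <;> rw [e, f] <;>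
    first
      | exact lt_of_le_of_lt (min_le_right _ _) (by linarith)
      | exact lt_of_le_of_lt (min_le_left _ _) (by linarith)

end Aux

/-- For connected `G`: if `(A, Aᶜ)` is a Cheeger cut, then at least one of the induced
subgraphs on `A` and on `Aᶜ` is connected. -/
theorem stmt13 {n : ℕ} (G : SimpleGraph (Fin n)) [DecidableRel G.Adj]
    (hn : 2 ≤ n) (hG : G.Connected) (A : Finset (Fin n)) (hA : IsCheegerCut G A) :
    IndConnected G A ∨ IndConnected G Aᶜ := by
  classical
  by_contra hcon
  push_neg at hcon
  obtain ⟨hncA, hncAc⟩ := hcon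
  obtain ⟨hAne, hAuniv, hAeq⟩ := hA
  have hAcne : Aᶜ.Nonempty := by
    obtain ⟨b, hb⟩ : ∃ b, b ∉ A := by
      by_contra h; push_neg at h; exact hAuniv (Finset.eq_univ_iff_forall.2 h)
    exact ⟨b, Finset.mem_compl.2 hb⟩
  obtain ⟨A₁, A₂, hA1ne, hA2ne, hA12d, hA12u, hA12adj⟩ := aux_decomp G hAne hncA
  obtain ⟨B₁, B₂, hB1ne, hB2ne, hB12d, hB12u, hB12adj⟩ := aux_decomp G hAcne hncAc
  have hA1sub : A₁ ⊆ A := hA12u ▸ Finset.subset_union_left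
  have hA2sub : A₂ ⊆ A := hA12u ▸ Finset.subset_union_right
  have hB1sub : B₁ ⊆ Aᶜ := hB12u ▸ Finset.subset_union_left
  have hB2sub : B₂ ⊆ Aᶜ := hB12u ▸ Finset.subset_union_right
  -- disjointness facts
  have hdAB : ∀ {X Y : Finset (Fin n)}, X ⊆ A → Y ⊆ Aᶜ → Disjoint X Y := by
    intro X Y hX hY
    exact Finset.disjoint_left.2 fun x hx hy => Finset.mem_compl.1 (hY hy) (hX hx)
  set S := A₁ ∪ B₁ with hS
  set T := A₁ ∪ B₂ with hT
  have hScompl : Sᶜ = A₂ ∪ B₂ := by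
    ext x
    simp only [hS, Finset.mem_compl, Finset.mem_union]
    have h1 : (x ∈ A₁ ∨ x ∈ A₂) ↔ x ∈ A := by rw [← hA12u]; simp
    have h2 : (x ∈ B₁ ∨ x ∈ B₂) ↔ x ∉ A := by rw [← Finset.mem_compl, ← hB12u]; simp
    have d1 := Finset.disjoint_left.1 hA12d
    have d2 := Finset.disjoint_left.1 hB12d
    by_cases hx : x ∈ A <;> tauto
  have hTcompl : Tᶜ = A₂ ∪ B₁ := by
    ext x
    simp only [hT, Finset.mem_compl, Finset.mem_union]
    have h1 : (x ∈ A₁ ∨ x ∈ A₂) ↔ x ∈ A := by rw [← hA12u]; simp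
    have h2 : (x ∈ B₁ ∨ x ∈ B₂) ↔ x ∉ A := by rw [← Finset.mem_compl, ← hB12u]; simp
    have d1 := Finset.disjoint_left.1 hA12d
    have d2 := Finset.disjoint_left.1 hB12d
    by_cases hx : x ∈ A <;> tauto
  -- volumes
  have vA1 := aux_vol_pos G hn hG hA1ne
  have vA2 := aux_vol_pos G hn hG hA2ne
  have vB1 := aux_vol_pos G hn hG hB1ne
  have vB2 := aux_vol_pos G hn hG hB2ne
  have hvolA : volA G A = volA G A₁ + volA G A₂ := by
    rw [← hA12u, aux_vol_union G _ _ hA12d]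
  have hvolAc : volA G Aᶜ = volA G B₁ + volA G B₂ := by
    rw [← hB12u, aux_vol_union G _ _ hB12d]
  have hvolS : volA G S = volA G A₁ + volA G B₁ :=
    aux_vol_union G _ _ (hdAB hA1sub hB1sub)
  have hvolSc : volA G Sᶜ = volA G A₂ + volA G B₂ := by
    rw [hScompl]; exact aux_vol_union G _ _ (hdAB hA2sub hB2sub)
  have hvolT : volA G T = volA G A₁ + volA G B₂ :=
    aux_vol_union G _ _ (hdAB hA1sub hB2sub)
  have hvolTc : volA G Tᶜ = volA G A₂ + volA G B₁ := by
    rw [hTcompl]; exact aux_vol_union G _ _ (hdAB hA2sub hB1sub)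
  -- boundary counts
  have hbA : bdryCard G A = auxE G A₁ B₁ + auxE G A₁ B₂ + (auxE G A₂ B₁ + auxE G A₂ B₂) := by
    rw [aux_bdry_eq, ← hB12u, ← hA12u,
      auxE_left G _ _ _ hA12d, auxE_right G _ _ _ hB12d, auxE_right G _ _ _ hB12d]
  have hbS : bdryCard G S = auxE G A₁ B₂ + auxE G A₂ B₁ := by
    rw [aux_bdry_eq, hScompl, hS, auxE_left G _ _ _ (hdAB hA1sub hB1sub),
      auxE_right G _ _ _ (hdAB hA2sub hB2sub), auxE_right G _ _ _ (hdAB hA2sub hB2sub),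
      auxE_zero G A₁ A₂ hA12adj, auxE_zero G B₁ B₂ hB12adj, auxE_symm G B₁ A₂]
    ring
  have hbT : bdryCard G T = auxE G A₁ B₁ + auxE G A₂ B₂ := by
    rw [aux_bdry_eq, hTcompl, hT, auxE_left G _ _ _ (hdAB hA1sub hB2sub),
      auxE_right G _ _ _ (hdAB hA2sub hB1sub), auxE_right G _ _ _ (hdAB hA2sub hB1sub),
      auxE_zero G A₁ A₂ hA12adj,
      auxE_zero G B₂ B₁ (fun x hx y hy h => hB12adj y hy x hx h.symm), auxE_symm G B₂ A₂]
    ring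
  have hbsum : bdryCard G S + bdryCard G T = bdryCard G A := by
    rw [hbS, hbT, hbA]; ring
  -- S, T nonempty and proper
  obtain ⟨a1, ha1⟩ := hA1ne
  obtain ⟨a2, ha2⟩ := hA2ne
  have ha2S : a2 ∉ S := by
    rw [← Finset.mem_compl] at *
    rw [hScompl]; exact Finset.mem_union_left _ ha2
  have ha2T : a2 ∉ T := by
    rw [← Finset.mem_compl] at *
    rw [hTcompl]; exact Finset.mem_union_left _ ha2
  have hSne : S.Nonempty := ⟨a1, Finset.mem_union_left _ ha1⟩
  have hTne : T.Nonempty := ⟨a1, Finset.mem_union_left _ ha1⟩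
  have hSuniv : S ≠ Finset.univ := fun h => ha2S (h ▸ Finset.mem_univ a2)
  have hTuniv : T ≠ Finset.univ := fun h => ha2T (h ▸ Finset.mem_univ a2)
  -- the min quantities
  set mA := min (volA G A) (volA G Aᶜ) with hmA
  set mS := min (volA G S) (volA G Sᶜ) with hmS
  set mT := min (volA G T) (volA G Tᶜ) with hmT
  have hmApos : 0 < mA := lt_min (aux_vol_pos G hn hG hAne) (aux_vol_pos G hn hG hAcne)
  have hmSpos : 0 < mS := by
    rw [hmS, hvolS, hvolSc]; exact lt_min (by linarith) (by linarith)
  have hmTpos : 0 < mT := by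
    rw [hmT, hvolT, hvolTc]; exact lt_min (by linarith) (by linarith)
  set h := cheegerConst G with hh
  have hA_eq : (bdryCard G A : ℝ) = h * mA := by
    have h0 := hAeq
    unfold cutRatio at h0
    rw [← hmA, div_eq_iff (ne_of_gt hmApos)] at h0
    exact h0
  have hpos : 0 < h := by
    have hb : (0:ℝ) < (bdryCard G A : ℝ) := by
      exact_mod_cast aux_bdry_pos G hG hAne hAuniv
    rw [hA_eq] at hb
    rcases mul_pos_iff.1 hb with ⟨h1, _⟩ | ⟨_, h2⟩
    · exact h1
    · linarith
  have hSge : h * mS ≤ (bdryCard G S : ℝ) := by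
    have := aux_cheeger_le G hn hG hSne hSuniv
    rw [← hh] at this
    unfold cutRatio at this
    rw [← hmS] at this
    rwa [le_div_iff₀ hmSpos] at this
  have hTge : h * mT ≤ (bdryCard G T : ℝ) := by
    have := aux_cheeger_le G hn hG hTne hTuniv
    rw [← hh] at this
    unfold cutRatio at this
    rw [← hmT] at this
    rwa [le_div_iff₀ hmTpos] at this
  have hmin : mA < mS + mT := by
    rw [hmA, hmS, hmT, hvolA, hvolAc, hvolS, hvolSc, hvolT, hvolTc]
    exact aux_min _ _ _ _ vA1 vA2 vB1 vB2
  have hsum : (bdryCard G S : ℝ) + (bdryCard G T : ℝ) = (bdryCard G A : ℝ) := by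
    exact_mod_cast congrArg (fun k : ℕ => (k : ℝ)) hbsum
  linarith [mul_lt_mul_of_pos_left hmin hpos, mul_add h mS mT]
end

section
/- Let x⁰ ∈ π and let v⁰ ∈ ℝⁿ satisfy v⁰_i = d_i when x⁰_i > 0, v⁰_i = −d_i when x⁰_i < 0, |v⁰_i| ≤ d_i when x⁰_i = 0, and Σ_i v⁰_i = 0. Set λ⁰ = I(x⁰). Let Gf : ℝⁿ → ℝ be a convex function attaining its global minimum at x⁰, and let x¹ be a global minimizer over ℝⁿ of x ↦ I(x) − λ⁰⟨v⁰, x⟩ + λ⁰ Gf(x). Then, provided x¹ ≠ 0, F(x¹) ≤ F(x⁰); moreover, for any α ∈ ℝ minimizing t ↦ Σ_i d_i|x¹_i − t| such that x¹ − α·(1,…,1) ≠ 0, one has F(x¹ − α·(1,…,1)) ≤ F(x⁰). -/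
open Finset

/-- `I(x) = (1/2) Σ_{i,j} a_{ij} |x_i − x_j|`, with `a` the adjacency matrix. -/
noncomputable def Ifun {n : ℕ} (G : SimpleGraph (Fin n)) [DecidableRel G.Adj]
    (x : Fin n → ℝ) : ℝ :=
  (1 / 2) * ∑ i, ∑ j, (if G.Adj i j then (1 : ℝ) else 0) * |x i - x j|

/-- Generalized steepest descent step: with `x⁰ ∈ π`, a subgradient `v⁰` of `‖·‖_{1,d}` at
`x⁰` with `Σ_i v⁰_i = 0`, `λ⁰ = I(x⁰)`, a convex `Gf` attaining its global minimum at `x⁰`,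
and `x¹` a global minimizer of `x ↦ I(x) − λ⁰⟨v⁰, x⟩ + λ⁰ Gf(x)`: then (provided `x¹ ≠ 0`)
`F(x¹) ≤ F(x⁰)`, and for any median `α` of `x¹` with `x¹ − α·1 ≠ 0`,
`F(x¹ − α·1) ≤ F(x⁰)`, where `F = I/‖·‖_{1,d}`. -/
theorem stmt19 {n : ℕ} (G : SimpleGraph (Fin n)) [DecidableRel G.Adj]
    (hd : ∀ i, 0 < dd G i) (x0 : Fin n → ℝ) (hx0 : x0 ∈ piSet G)
    (v0 : Fin n → ℝ)
    (hv1 : ∀ i, 0 < x0 i → v0 i = dd G i)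
    (hv2 : ∀ i, x0 i < 0 → v0 i = -dd G i)
    (hv3 : ∀ i, x0 i = 0 → |v0 i| ≤ dd G i)
    (hv4 : (∑ i, v0 i) = 0)
    (lam0 : ℝ) (hlam0 : lam0 = Ifun G x0)
    (Gf : (Fin n → ℝ) → ℝ) (hGf : ConvexOn ℝ Set.univ Gf)
    (hGfmin : ∀ y : Fin n → ℝ, Gf x0 ≤ Gf y)
    (x1 : Fin n → ℝ)
    (hx1 : ∀ y : Fin n → ℝ,
      Ifun G x1 - lam0 * (∑ i, v0 i * x1 i) + lam0 * Gf x1 ≤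
      Ifun G y - lam0 * (∑ i, v0 i * y i) + lam0 * Gf y) :
    (x1 ≠ 0 → Ifun G x1 / norm1d G x1 ≤ Ifun G x0 / norm1d G x0) ∧
    (∀ α : ℝ, (∀ t : ℝ, (∑ i, dd G i * |x1 i - α|) ≤ ∑ i, dd G i * |x1 i - t|) →
      (fun i => x1 i - α) ≠ 0 →
      Ifun G (fun i => x1 i - α) / norm1d G (fun i => x1 i - α) ≤
        Ifun G x0 / norm1d G x0) := by

  obtain ⟨hx0n, -⟩ := hx0
  have hvle : ∀ i, |v0 i| ≤ dd G i := by
    intro i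
    rcases lt_trichotomy (x0 i) 0 with h|h|h
    · rw [hv2 i h, abs_neg, abs_of_nonneg (hd i).le]
    · exact hv3 i h
    · rw [hv1 i h, abs_of_nonneg (hd i).le]
  have hIP : ∀ x : Fin n → ℝ, (∑ i, v0 i * x i) ≤ norm1d G x := by
    intro x
    unfold norm1d
    apply Finset.sum_le_sum
    intro i _
    calc v0 i * x i ≤ |v0 i * x i| := le_abs_self _
      _ = |v0 i| * |x i| := abs_mul _ _
      _ ≤ dd G i * |x i| := mul_le_mul_of_nonneg_right (hvle i) (abs_nonneg _)
  have hinner0 : (∑ i, v0 i * x0 i) = 1 := by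
    rw [← hx0n]
    unfold norm1d
    apply Finset.sum_congr rfl
    intro i _
    rcases lt_trichotomy (x0 i) 0 with h|h|h
    · rw [hv2 i h, abs_of_neg h]; ring
    · rw [h, abs_zero]; ring
    · rw [hv1 i h, abs_of_pos h]
  have hlamnn : 0 ≤ lam0 := by
    rw [hlam0]
    unfold Ifun
    apply mul_nonneg (by norm_num)
    apply Finset.sum_nonneg
    intro i _
    apply Finset.sum_nonneg
    intro j _
    exact mul_nonneg (by split <;> norm_num) (abs_nonneg _)
  have hkey : Ifun G x1 ≤ lam0 * (∑ i, v0 i * x1 i) := by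
    have h := hx1 x0
    rw [hinner0, ← hlam0] at h
    have hg := mul_le_mul_of_nonneg_left (hGfmin x1) hlamnn
    linarith
  have hnormpos : ∀ x : Fin n → ℝ, x ≠ 0 → 0 < norm1d G x := by
    intro x hx
    obtain ⟨i, hi⟩ := Function.ne_iff.mp hx
    unfold norm1d
    apply Finset.sum_pos' (fun j _ => mul_nonneg (hd j).le (abs_nonneg _))
    exact ⟨i, Finset.mem_univ i, mul_pos (hd i) (abs_pos.mpr hi)⟩
  have hrhs : Ifun G x0 / norm1d G x0 = lam0 := by
    rw [hx0n, hlam0, div_one]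
  constructor
  · intro hx1ne
    rw [hrhs, div_le_iff₀ (hnormpos x1 hx1ne)]
    calc Ifun G x1 ≤ lam0 * (∑ i, v0 i * x1 i) := hkey
      _ ≤ lam0 * norm1d G x1 := mul_le_mul_of_nonneg_left (hIP x1) hlamnn
  · intro α _ hne
    rw [hrhs, div_le_iff₀ (hnormpos _ hne)]
    have hshift : Ifun G (fun i => x1 i - α) = Ifun G x1 := by
      unfold Ifun
      congr 1
      apply Finset.sum_congr rfl
      intro i _
      apply Finset.sum_congr rfl
      intro j _
      congr 1
      rw [sub_sub_sub_cancel_right]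
    have hinnershift : (∑ i, v0 i * (x1 i - α)) = ∑ i, v0 i * x1 i := by
      simp only [mul_sub, Finset.sum_sub_distrib]
      rw [← Finset.sum_mul, hv4, zero_mul, sub_zero]
    calc Ifun G (fun i => x1 i - α) = Ifun G x1 := hshift
      _ ≤ lam0 * (∑ i, v0 i * x1 i) := hkey
      _ = lam0 * (∑ i, v0 i * (x1 i - α)) := by rw [hinnershift]
      _ ≤ lam0 * norm1d G (fun i => x1 i - α) :=
          mul_le_mul_of_nonneg_left (hIP _) hlamnn
end
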